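/- arXiv:1704.03547 — 12 statements merged into one kernel-verified Lean document; each statement's English description precedes it below -/
import Mathlib

section
/- Let b1 be a binary additive valuation on [m] identified with the set A = {i ∈ [m] : b1({i}) = 1}, and let v2 be a binary XOS valuation on [m]. Then the allocation that awards A to the first player and [m] ∖ A to the second achieves the optimal welfare, i.e. b1(A) + v2([m] ∖ A) = SW*(b1, v2) = max_{S ⊆ [m]} (b1(S) + v2([m] ∖ S)). -/
open Finset

/-- Value of a binary additive valuation (identified with the set `A`) on a bundle `S`. -/
def bval {m : ℕ} (A S : Finset (Fin m)) : ℕ := (A ∩ S).card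

/-- Value of a binary XOS valuation with clause set `V` on a bundle `S`. -/
def xval {m : ℕ} (V : Finset (Finset (Fin m))) (S : Finset (Fin m)) : ℕ :=
  V.sup fun C => (C ∩ S).card

/-- Optimal welfare between two (ℕ-valued) valuations on `[m]`. -/
def swB {m : ℕ} (v1 v2 : Finset (Fin m) → ℕ) : ℕ :=
  Finset.univ.sup fun S : Finset (Fin m) => v1 S + v2 Sᶜ

/-- awarding `A` to the binary additive player and the rest to the
binary XOS player achieves the optimal welfare. -/
theorem stmt0 {m : ℕ} (A : Finset (Fin m))
    (V : Finset (Finset (Fin m))) (hV : V.Nonempty) :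
    bval A A + xval V Aᶜ = swB (bval A) (xval V) := by
  apply le_antisymm
  · exact Finset.le_sup (f := fun S : Finset (Fin m) => bval A S + xval V Sᶜ) (mem_univ A)
  · apply Finset.sup_le
    intro S _
    obtain ⟨C, hC, hEq⟩ := Finset.exists_mem_eq_sup V hV (fun C => (C ∩ Sᶜ).card)
    show bval A S + xval V Sᶜ ≤ _
    rw [show xval V Sᶜ = (C ∩ Sᶜ).card from hEq]
    have hsd : ∀ X : Finset (Fin m), X \ A = X ∩ Aᶜ := by
      intro X; ext x; simp [Finset.mem_sdiff]
    have h1 : (C ∩ Sᶜ).card ≤ ((C ∩ Sᶜ) ∩ A).card + ((C ∩ Sᶜ) ∩ Aᶜ).card := by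
      rw [← hsd, Finset.card_inter_add_card_sdiff]
    have h2 : ((C ∩ Sᶜ) ∩ A).card ≤ (A ∩ Sᶜ).card :=
      Finset.card_le_card (fun x hx => by
        simp only [mem_inter] at hx ⊢; exact ⟨hx.2, hx.1.2⟩)
    have h3 : ((C ∩ Sᶜ) ∩ Aᶜ).card ≤ xval V Aᶜ := by
      refine le_trans (Finset.card_le_card ?_) (Finset.le_sup (f := fun C => (C ∩ Aᶜ).card) hC)
      intro x hx; simp only [mem_inter] at hx ⊢; exact ⟨hx.1.1, hx.2⟩
    have hsd2 : ∀ X : Finset (Fin m), X \ S = X ∩ Sᶜ := by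
      intro X; ext x; simp [Finset.mem_sdiff]
    have h4 : (A ∩ S).card + (A ∩ Sᶜ).card = A.card := by
      rw [← hsd2, Finset.card_inter_add_card_sdiff]
    have hb : bval A A = A.card := by simp [bval]
    rw [hb]
    show (A ∩ S).card + (C ∩ Sᶜ).card ≤ _
    omega
end

section
/- Let v1 and v2 be binary XOS valuations on [m]. Let b1 be a clause of v1 maximizing |b1| over all clauses of v1, and let (b2, b3) be a pair of clauses of v1 maximizing SW*(b2, b3) over all pairs of clauses of v1. Then (1/3) · (SW*(b1, v2) + SW*(b2, v2) + SW*(b3, v2)) ≥ (2/3) · SW*(v1, v2). (Consequently, the simultaneous randomized warmup protocol that makes Alice report one of b1, b2, b3 uniformly at random and allocates accordingly is a 2/3-approximation to the 2-party BXOS allocation problem.) -/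
open Finset

lemma swB_ge {m : ℕ} (v1 v2 : Finset (Fin m) → ℕ) (S : Finset (Fin m)) :
    v1 S + v2 Sᶜ ≤ swB v1 v2 :=
  Finset.le_sup (f := fun S => v1 S + v2 Sᶜ) (mem_univ S)

lemma xval_ge {m : ℕ} {V : Finset (Finset (Fin m))} {A : Finset (Fin m)} (hA : A ∈ V)
    (S : Finset (Fin m)) : (A ∩ S).card ≤ xval V S :=
  Finset.le_sup (f := fun C => (C ∩ S).card) hA

lemma card_inter_split {m : ℕ} (A X : Finset (Fin m)) :
    (A ∩ X).card + (A ∩ Xᶜ).card = A.card := by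
  rw [← Finset.card_union_of_disjoint]
  · congr 1
    rw [← Finset.inter_union_distrib_left, Finset.union_compl, Finset.inter_univ]
  · exact Finset.disjoint_left.2 fun a ha hb => by
      have h1 := (Finset.mem_inter.1 ha).2
      have h2 := (Finset.mem_inter.1 hb).2
      exact (Finset.mem_compl.1 h2) h1

/-- if `b1` is a largest clause of `v1` and `(b2, b3)` is a pair of clauses of
`v1` maximizing `SW*(b2, b3)`, then the average of `SW*(b_j, v2)` over `j = 1, 2, 3` is at
least `(2/3) · SW*(v1, v2)`. -/
theorem stmt1 {m : ℕ} (V1 V2 : Finset (Finset (Fin m)))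
    (hV1 : V1.Nonempty) (hV2 : V2.Nonempty)
    (b1 b2 b3 : Finset (Fin m))
    (hb1 : b1 ∈ V1) (hb2 : b2 ∈ V1) (hb3 : b3 ∈ V1)
    (hmax1 : ∀ c ∈ V1, c.card ≤ b1.card)
    (hmax23 : ∀ c ∈ V1, ∀ d ∈ V1, swB (bval c) (bval d) ≤ swB (bval b2) (bval b3)) :
    (1 / 3 : ℝ) * ((swB (bval b1) (xval V2) : ℝ) + (swB (bval b2) (xval V2) : ℝ)
        + (swB (bval b3) (xval V2) : ℝ))
      ≥ (2 / 3 : ℝ) * (swB (xval V1) (xval V2) : ℝ) := by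
  -- Reduce to a natural-number inequality
  suffices h : 2 * swB (xval V1) (xval V2) ≤
      swB (bval b1) (xval V2) + swB (bval b2) (xval V2) + swB (bval b3) (xval V2) by
    have := (Nat.cast_le (α := ℝ)).2 h
    push_cast at this
    linarith
  -- S* : optimal bundle for (v1, v2)
  obtain ⟨S, -, hS⟩ := Finset.exists_mem_eq_sup (univ : Finset (Finset (Fin m)))
    univ_nonempty (fun S : Finset (Fin m) => xval V1 S + xval V2 Sᶜ)
  have hO : swB (xval V1) (xval V2) = xval V1 S + xval V2 Sᶜ := hS
  -- c* : best clause of V1 on S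
  obtain ⟨c, hc, hcS⟩ := Finset.exists_mem_eq_sup V1 hV1 (fun C => (C ∩ S).card)
  have hv1S : xval V1 S = (c ∩ S).card := hcS
  set w := xval V2 Sᶜ with hw
  -- SW1 ≥ |b1 ∩ S| + w
  have h1 : (b1 ∩ S).card + w ≤ swB (bval b1) (xval V2) := swB_ge (bval b1) (xval V2) S
  -- swB (bval b2) (bval b3) ≥ |c ∩ S| + |b1 ∩ Sᶜ|
  have h2 : (c ∩ S).card + (b1 ∩ Sᶜ).card ≤ swB (bval b2) (bval b3) :=
    le_trans (swB_ge (bval c) (bval b1) S) (hmax23 c hc b1 hb1)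
  -- SW2 + SW3 ≥ swB (bval b2) (bval b3) + w
  have h3 : swB (bval b2) (bval b3) + w ≤
      swB (bval b2) (xval V2) + swB (bval b3) (xval V2) := by
    obtain ⟨X, -, hX⟩ := Finset.exists_mem_eq_sup (univ : Finset (Finset (Fin m)))
      univ_nonempty (fun X : Finset (Fin m) => bval b2 X + bval b3 Xᶜ)
    have hP : swB (bval b2) (bval b3) = (b2 ∩ X).card + (b3 ∩ Xᶜ).card := hX
    have hA2 : (b2 ∩ X).card + xval V2 Xᶜ ≤ swB (bval b2) (xval V2) :=
      swB_ge (bval b2) (xval V2) X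
    have hA3 : (b3 ∩ Xᶜ).card + xval V2 X ≤ swB (bval b3) (xval V2) := by
      have := swB_ge (bval b3) (xval V2) Xᶜ
      rwa [compl_compl] at this
    -- w ≤ xval V2 X + xval V2 Xᶜ
    obtain ⟨A, hA, hAval⟩ := Finset.exists_mem_eq_sup V2 hV2 (fun C => (C ∩ Sᶜ).card)
    have hwA : w = (A ∩ Sᶜ).card := hAval
    have hwle : w ≤ xval V2 X + xval V2 Xᶜ := by
      have hcard : (A ∩ Sᶜ).card ≤ A.card := Finset.card_le_card Finset.inter_subset_left
      have hsplit := card_inter_split A X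
      have := xval_ge hA X
      have := xval_ge hA Xᶜ
      omega
    omega
  -- |b1| ≥ |c ∩ S|
  have h4 : (c ∩ S).card ≤ b1.card :=
    le_trans (Finset.card_le_card Finset.inter_subset_left) (hmax1 c hc)
  have h5 := card_inter_split b1 S
  omega
end

section
/- Let v1 and v2 be XOS valuations on [m]. Let b1 be a clause of v1 maximizing b1([m]) over clauses of v1, let (b2, b3) be a pair of clauses of v1 maximizing SW*(b2, b3), let b4 be a clause of v2 maximizing b4([m]) over clauses of v2, and let (b5, b6) be a pair of clauses of v2 maximizing SW*(b5, b6). Then max over j ∈ {1,2,3} and j' ∈ {4,5,6} of SW*(b_j, b_{j'}) is at least (3/5) · SW*(v1, v2). -/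
open Finset

/-- Value of an additive valuation `a : Fin m → ℝ` on a bundle `S`. -/
noncomputable def aval {m : ℕ} (a : Fin m → ℝ) (S : Finset (Fin m)) : ℝ := ∑ i ∈ S, a i

/-- Value of an XOS valuation with (nonempty list of) additive clauses `C` on a bundle `S`. -/
noncomputable def xosVal {m t : ℕ} (C : Fin (t + 1) → Fin m → ℝ) (S : Finset (Fin m)) : ℝ :=
  Finset.univ.sup' Finset.univ_nonempty fun j => aval (C j) S

/-- Optimal welfare between two (ℝ-valued) valuations on `[m]`. -/
noncomputable def swR {m : ℕ} (v1 v2 : Finset (Fin m) → ℝ) : ℝ :=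
  Finset.univ.sup' Finset.univ_nonempty fun S : Finset (Fin m) => v1 S + v2 Sᶜ

private lemma swR_ge {m : ℕ} (v1 v2 : Finset (Fin m) → ℝ) (S : Finset (Fin m)) :
    v1 S + v2 Sᶜ ≤ swR v1 v2 :=
  Finset.le_sup' (fun S : Finset (Fin m) => v1 S + v2 Sᶜ) (Finset.mem_univ S)

private lemma aval_split {m : ℕ} (a : Fin m → ℝ) (S : Finset (Fin m)) :
    aval a S + aval a Sᶜ = aval a Finset.univ := by
  simpa [aval] using Finset.sum_add_sum_compl S a

private lemma aval_nonneg {m : ℕ} (a : Fin m → ℝ) (ha : ∀ i, 0 ≤ a i) (S : Finset (Fin m)) :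
    0 ≤ aval a S :=
  Finset.sum_nonneg fun i _ => ha i

/-- for XOS valuations `v1, v2`, if `b1` is a clause of `v1` maximizing
`b1([m])`, `(b2, b3)` a pair of clauses of `v1` maximizing `SW*(b2, b3)`, `b4` a clause of
`v2` maximizing `b4([m])`, and `(b5, b6)` a pair of clauses of `v2` maximizing `SW*(b5, b6)`,
then `max_{j ∈ {1,2,3}, j' ∈ {4,5,6}} SW*(b_j, b_{j'}) ≥ (3/5) · SW*(v1, v2)`. -/
theorem stmt2 {m t1 t2 : ℕ}
    (C1 : Fin (t1 + 1) → Fin m → ℝ) (C2 : Fin (t2 + 1) → Fin m → ℝ)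
    (hC1 : ∀ j i, 0 ≤ C1 j i) (hC2 : ∀ j i, 0 ≤ C2 j i)
    (j1 j2 j3 : Fin (t1 + 1)) (j4 j5 j6 : Fin (t2 + 1))
    (hj1 : ∀ j, aval (C1 j) Finset.univ ≤ aval (C1 j1) Finset.univ)
    (hj23 : ∀ j j', swR (aval (C1 j)) (aval (C1 j'))
      ≤ swR (aval (C1 j2)) (aval (C1 j3)))
    (hj4 : ∀ j, aval (C2 j) Finset.univ ≤ aval (C2 j4) Finset.univ)
    (hj56 : ∀ j j', swR (aval (C2 j)) (aval (C2 j'))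
      ≤ swR (aval (C2 j5)) (aval (C2 j6))) :
    Finset.univ.sup' Finset.univ_nonempty
        (fun p : Fin 3 × Fin 3 =>
          swR (aval (![C1 j1, C1 j2, C1 j3] p.1)) (aval (![C2 j4, C2 j5, C2 j6] p.2)))
      ≥ (3 / 5 : ℝ) * swR (xosVal C1) (xosVal C2) := by
  classical
  set M : ℝ := Finset.univ.sup' Finset.univ_nonempty
        (fun p : Fin 3 × Fin 3 =>
          swR (aval (![C1 j1, C1 j2, C1 j3] p.1)) (aval (![C2 j4, C2 j5, C2 j6] p.2))) with hMdef
  have hM : ∀ p : Fin 3 × Fin 3,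
      swR (aval (![C1 j1, C1 j2, C1 j3] p.1)) (aval (![C2 j4, C2 j5, C2 j6] p.2)) ≤ M :=
    fun p => Finset.le_sup'
      (fun p : Fin 3 × Fin 3 =>
        swR (aval (![C1 j1, C1 j2, C1 j3] p.1)) (aval (![C2 j4, C2 j5, C2 j6] p.2)))
      (Finset.mem_univ p)
  -- optimal split S for the XOS welfare
  obtain ⟨S, -, hS⟩ := Finset.exists_mem_eq_sup' (Finset.univ_nonempty)
    (fun S : Finset (Fin m) => xosVal C1 S + xosVal C2 Sᶜ)
  obtain ⟨ja, -, hja⟩ := Finset.exists_mem_eq_sup' (Finset.univ_nonempty)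
    (fun j : Fin (t1 + 1) => aval (C1 j) S)
  obtain ⟨jb, -, hjb⟩ := Finset.exists_mem_eq_sup' (Finset.univ_nonempty)
    (fun j : Fin (t2 + 1) => aval (C2 j) Sᶜ)
  have hOPT : swR (xosVal C1) (xosVal C2) = aval (C1 ja) S + aval (C2 jb) Sᶜ := by
    rw [swR, hS]; unfold xosVal; rw [hja, hjb]
  set W1 : ℝ := swR (aval (C1 j2)) (aval (C1 j3)) with hW1def
  set W2 : ℝ := swR (aval (C2 j5)) (aval (C2 j6)) with hW2def
  obtain ⟨T, -, hT⟩ := Finset.exists_mem_eq_sup' (Finset.univ_nonempty)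
    (fun S : Finset (Fin m) => aval (C1 j2) S + aval (C1 j3) Sᶜ)
  obtain ⟨R, -, hR⟩ := Finset.exists_mem_eq_sup' (Finset.univ_nonempty)
    (fun S : Finset (Fin m) => aval (C2 j5) S + aval (C2 j6) Sᶜ)
  have hTW : W1 = aval (C1 j2) T + aval (C1 j3) Tᶜ := by rw [hW1def, swR, hT]
  have hRW : W2 = aval (C2 j5) R + aval (C2 j6) Rᶜ := by rw [hW2def, swR, hR]
  -- totals of the max–total clauses dominate totals of the optimal clauses
  have h1 : aval (C1 ja) Finset.univ ≤ aval (C1 j1) Finset.univ := hj1 ja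
  have h2 : aval (C2 jb) Finset.univ ≤ aval (C2 j4) Finset.univ := hj4 jb
  -- W1 ≥ x + b1(Sᶜ)
  have hW1x : aval (C1 ja) S + aval (C1 j1) Sᶜ ≤ W1 :=
    le_trans (swR_ge _ _ S) (hj23 ja j1)
  -- W2 ≥ y + b4(S)
  have hW2y : aval (C2 jb) Sᶜ + aval (C2 j4) S ≤ W2 := by
    have := le_trans (swR_ge (aval (C2 jb)) (aval (C2 j4)) Sᶜ) (hj56 jb j4)
    simpa [compl_compl] using this
  -- five candidate bounds
  have hA : aval (C1 j1) S + aval (C2 j4) Sᶜ ≤ M := by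
    refine le_trans (swR_ge _ _ S) ?_
    simpa using hM (0, 0)
  have hB : aval (C1 j2) T + aval (C2 j4) Tᶜ ≤ M := by
    refine le_trans (swR_ge _ _ T) ?_
    simpa using hM (1, 0)
  have hC : aval (C1 j3) Tᶜ + aval (C2 j4) T ≤ M := by
    refine le_trans ?_ (hM (2, 0))
    have := swR_ge (aval (C1 j3)) (aval (C2 j4)) Tᶜ
    simpa [compl_compl] using this
  have hD : aval (C1 j1) Rᶜ + aval (C2 j5) R ≤ M := by
    refine le_trans ?_ (hM (0, 1))
    have := swR_ge (aval (C1 j1)) (aval (C2 j5)) Rᶜ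
    simpa [compl_compl] using this
  have hE : aval (C1 j1) R + aval (C2 j6) Rᶜ ≤ M := by
    refine le_trans (swR_ge _ _ R) ?_
    simpa using hM (0, 2)
  -- additive splits
  have s1 := aval_split (C1 ja) S
  have s2 := aval_split (C2 jb) S
  have s3 := aval_split (C1 j1) S
  have s4 := aval_split (C2 j4) S
  have s5 := aval_split (C2 j4) T
  have s6 := aval_split (C1 j1) R
  -- nonnegativity
  have n1 : 0 ≤ aval (C1 ja) Sᶜ := aval_nonneg _ (hC1 ja) _
  have n2 : 0 ≤ aval (C2 jb) S := aval_nonneg _ (hC2 jb) _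
  rw [ge_iff_le, hOPT]
  linarith [hA, hB, hC, hD, hE, hTW, hRW, hW1x, hW2y, h1, h2, s1, s2, s3, s4, s5, s6, n1, n2]
end

section
/- Let v be a binary XOS valuation on [m], let 0 < α ≤ 1/2, let k be a positive integer, and let (b_1,…,b_k) be a (k,α)-sketch of v. Let a be a clause of v and let A ⊆ {i ∈ [m] : i ∈ a}. Then, writing x_i = (1/k) ∑_{j=1}^k 1[i ∈ b_j], we have ∑_{i=1}^m (x_i − 2α x_i²) + 2α ∑_{i∈A} x_i ≥ |A| − 2α·v([m])/k. -/
open Finset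

/-- `x_i`: the fraction of the `k` sketch clauses `b` containing item `i`. -/
noncomputable def sketchX {m k : ℕ} (b : Fin k → Finset (Fin m)) (i : Fin m) : ℝ :=
  (∑ j, if i ∈ b j then (1 : ℝ) else 0) / k

/-- The objective `∑ i (x_i − α x_i²)` that a `(k,α)`-sketch maximizes. -/
noncomputable def sketchObj {m k : ℕ} (α : ℝ) (b : Fin k → Finset (Fin m)) : ℝ :=
  ∑ i, (sketchX b i - α * (sketchX b i) ^ 2)

/-- `(b_1,…,b_k)` is a `(k,α)`-sketch of the binary XOS valuation with clause set `V`: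
each `b_j` is a clause, and the tuple maximizes `∑ i (x_i − α x_i²)` over all k-tuples of
clauses (repetitions allowed). -/
def IsSketch {m k : ℕ} (α : ℝ) (V : Finset (Finset (Fin m)))
    (b : Fin k → Finset (Fin m)) : Prop :=
  (∀ j, b j ∈ V) ∧
    ∀ c : Fin k → Finset (Fin m), (∀ j, c j ∈ V) → sketchObj α c ≤ sketchObj α b

noncomputable def ind {m : ℕ} (S : Finset (Fin m)) (i : Fin m) : ℝ := if i ∈ S then 1 else 0

lemma ind_nonneg {m : ℕ} (S : Finset (Fin m)) (i : Fin m) : 0 ≤ ind S i := by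
  unfold ind; split <;> norm_num

lemma ind_le_one {m : ℕ} (S : Finset (Fin m)) (i : Fin m) : ind S i ≤ 1 := by
  unfold ind; split <;> norm_num

lemma sum_ind {m : ℕ} (S : Finset (Fin m)) : ∑ i, ind S i = S.card := by
  simp [ind, Finset.sum_ite_mem]

/-- the sketch inequality for binary XOS valuations
(Lemma `lem:bsketch` of the paper). -/
theorem stmt3 {m k : ℕ} (hk : 0 < k) (α : ℝ) (hα0 : 0 < α) (hα : α ≤ 1 / 2)
    (V : Finset (Finset (Fin m))) (hV : V.Nonempty)
    (b : Fin k → Finset (Fin m)) (hb : IsSketch α V b)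
    (a : Finset (Fin m)) (ha : a ∈ V) (A : Finset (Fin m)) (hA : A ⊆ a) :
    ∑ i, (sketchX b i - 2 * α * (sketchX b i) ^ 2) + 2 * α * ∑ i ∈ A, sketchX b i
      ≥ (A.card : ℝ) - 2 * α * (xval V Finset.univ : ℝ) / k := by
  classical
  have hk' : (0:ℝ) < k := by exact_mod_cast hk
  set x : Fin m → ℝ := sketchX b with hxdef
  set v : ℝ := (xval V Finset.univ : ℝ) with hvdef
  set d : Fin k → Fin m → ℝ := fun j i => (ind a i - ind (b j) i) / k with hddef
  have hx_eq : ∀ i, x i = (∑ j, ind (b j) i) / k := fun i => rfl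
  have hx0 : ∀ i, 0 ≤ x i := fun i => by
    rw [hx_eq]
    exact div_nonneg (Finset.sum_nonneg fun j _ => ind_nonneg _ _) hk'.le
  have hx1 : ∀ i, x i ≤ 1 := fun i => by
    rw [hx_eq, div_le_one hk']
    calc ∑ j, ind (b j) i ≤ ∑ _j : Fin k, (1:ℝ) :=
          Finset.sum_le_sum fun j _ => ind_le_one _ _
      _ = k := by simp
  -- cardinality bound for clauses
  have hcard : ∀ C ∈ V, (C.card : ℝ) ≤ v := by
    intro C hC
    have h2 : (C ∩ Finset.univ).card ≤ xval V Finset.univ := Finset.le_sup (f := fun C => (C ∩ Finset.univ).card) hC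
    rw [Finset.inter_univ] at h2
    rw [hvdef]
    exact_mod_cast h2
  -- sketchX after updating coordinate j to a
  have hupd : ∀ j i, sketchX (Function.update b j a) i = x i + d j i := by
    intro j i
    have hterm : ∀ j', (if i ∈ Function.update b j a j' then (1:ℝ) else 0)
        = ind (b j') i + (if j' = j then ind a i - ind (b j) i else 0) := by
      intro j'
      rcases eq_or_ne j' j with h | h <;> simp [h, Function.update_apply, ind]
    rw [sketchX, Finset.sum_congr rfl fun j' _ => hterm j', Finset.sum_add_distrib,
      Finset.sum_ite_eq' Finset.univ j]
    simp [hx_eq, hddef, add_div]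
  -- per-j inequality from maximality
  have hperj : ∀ j, ∑ i, d j i * (1 - 2*α*x i) ≤ α * ∑ i, (d j i)^2 := by
    intro j
    have hc : ∀ j', Function.update b j a j' ∈ V := by
      intro j'
      rcases eq_or_ne j' j with h | h <;> simp [h, Function.update_apply, ha, hb.1 j']
    have hle := hb.2 (Function.update b j a) hc
    rw [sketchObj, sketchObj] at hle
    have hle' : ∑ i, ((x i + d j i) - α * (x i + d j i)^2) ≤ ∑ i, (x i - α * x i ^ 2) := by
      calc ∑ i, ((x i + d j i) - α * (x i + d j i)^2)
          = ∑ i, (sketchX (Function.update b j a) i - α * (sketchX (Function.update b j a) i)^2) :=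
            Finset.sum_congr rfl fun i _ => by rw [hupd]
        _ ≤ _ := hle
    have key : ∑ i, d j i * (1 - 2*α*x i) - α * ∑ i, (d j i)^2
        = ∑ i, ((x i + d j i) - α * (x i + d j i)^2) - ∑ i, (x i - α * x i ^ 2) := by
      rw [Finset.mul_sum, ← Finset.sum_sub_distrib, ← Finset.sum_sub_distrib]
      exact Finset.sum_congr rfl fun i _ => by ring
    linarith [key, hle']
  -- summing d over j
  have hsum_d : ∀ i, ∑ j, d j i = ind a i - x i := by
    intro i
    rw [hx_eq]
    simp only [hddef]
    rw [← Finset.sum_div, Finset.sum_sub_distrib, Finset.sum_const, Finset.card_univ,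
      Fintype.card_fin, sub_div, nsmul_eq_mul, mul_div_cancel_left₀ _ (ne_of_gt hk')]
  have hB : ∑ j, ∑ i, d j i * (1 - 2*α*x i) = ∑ i, (ind a i - x i) * (1 - 2*α*x i) := by
    rw [Finset.sum_comm]
    exact Finset.sum_congr rfl fun i _ => by rw [← Finset.sum_mul, hsum_d]
  -- bound on sum of squares
  have hsq : ∀ j, ∑ i, (d j i)^2 ≤ 2*v/k^2 := by
    intro j
    have h1 : ∀ i, (d j i)^2 ≤ (ind a i + ind (b j) i)/k^2 := by
      intro i
      rw [hddef]
      simp only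
      rw [div_pow]
      gcongr
      unfold ind; by_cases h1 : i ∈ a <;> by_cases h2 : i ∈ b j <;> simp [h1, h2] <;> norm_num
    calc ∑ i, (d j i)^2 ≤ ∑ i, (ind a i + ind (b j) i)/k^2 :=
          Finset.sum_le_sum fun i _ => h1 i
      _ = ((a.card : ℝ) + ((b j).card : ℝ))/k^2 := by
          rw [← Finset.sum_div, Finset.sum_add_distrib, sum_ind, sum_ind]
      _ ≤ (v + v)/k^2 := by
          gcongr
          · exact hcard a ha
          · exact hcard (b j) (hb.1 j)
      _ = 2*v/k^2 := by ring
  -- key combined inequality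
  have hkey : ∑ i, (ind a i - x i) * (1 - 2*α*x i) ≤ 2*α*v/k := by
    rw [← hB]
    calc ∑ j, ∑ i, d j i * (1 - 2*α*x i) ≤ ∑ j, α * ∑ i, (d j i)^2 :=
          Finset.sum_le_sum fun j _ => hperj j
      _ ≤ ∑ _j : Fin k, α * (2*v/k^2) :=
          Finset.sum_le_sum fun j _ => by
            exact mul_le_mul_of_nonneg_left (hsq j) hα0.le
      _ = k * (α * (2*v/k^2)) := by
          rw [Finset.sum_const, Finset.card_univ, Fintype.card_fin, nsmul_eq_mul]
      _ = 2*α*v/k := by field_simp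
  -- restrict to A
  have htnn : ∀ i, 0 ≤ 1 - 2*α*x i := by
    intro i
    nlinarith [hx0 i, hx1 i, hα0.le]
  have hDa : ∑ i, ind a i * (1 - 2*α*x i) = ∑ i ∈ a, (1 - 2*α*x i) := by
    rw [Finset.sum_congr rfl fun i _ => by rw [ind, ite_mul, one_mul, zero_mul]]
    rw [Finset.sum_ite_mem, Finset.univ_inter]
  have hDA : ∑ i ∈ A, (1 - 2*α*x i) ≤ ∑ i ∈ a, (1 - 2*α*x i) :=
    Finset.sum_le_sum_of_subset_of_nonneg hA fun i _ _ => htnn i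
  have hE : ∑ i ∈ A, (1 - 2*α*x i) = (A.card : ℝ) - 2*α*∑ i ∈ A, x i := by
    rw [Finset.sum_sub_distrib, Finset.sum_const, nsmul_eq_mul, mul_one, ← Finset.mul_sum]
  -- final assembly
  have hsplit : ∑ i, (ind a i - x i) * (1 - 2*α*x i)
      = ∑ i, ind a i * (1 - 2*α*x i) - ∑ i, (x i - 2*α*x i^2) := by
    rw [← Finset.sum_sub_distrib]
    exact Finset.sum_congr rfl fun i _ => by ring
  have hgoal : ∑ i, (x i - 2*α*x i^2) + 2*α*∑ i ∈ A, x i ≥ (A.card : ℝ) - 2*α*v/k := by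
    have := hkey
    rw [hsplit] at this
    linarith [hDA, hE, hDa]
  calc ∑ i, (sketchX b i - 2 * α * (sketchX b i) ^ 2) + 2 * α * ∑ i ∈ A, sketchX b i
      = ∑ i, (x i - 2*α*x i^2) + 2*α*∑ i ∈ A, x i := by rw [hxdef]
    _ ≥ (A.card : ℝ) - 2*α*v/k := hgoal
    _ = (A.card : ℝ) - 2 * α * (xval V Finset.univ : ℝ) / k := by rw [hvdef]
end

section
/- Let v be a binary XOS valuation on [m], let 0 < α ≤ 1/2, let k be a positive integer, and let (b_1,…,b_k) be a (k,α)-sketch of v. Let a be a clause of v and set A = {i ∈ [m] : i ∈ a}. Then, writing x_i = (1/k) ∑_{j=1}^k 1[i ∈ b_j], the following strengthened sketch inequality holds: ∑_{i=1}^m (x_i − 2α x_i²) + 2α ∑_{i∈A} x_i ≥ |A| − α·(|A| + ∑_{i=1}^m x_i)/k. -/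
open Finset

/-- the strengthened sketch inequality for binary XOS valuations, with `A`
equal to (the set of) a clause `a` of `v` and error term `α(|A| + ∑ x_i)/k`. -/
theorem stmt4 {m k : ℕ} (hk : 0 < k) (α : ℝ) (hα0 : 0 < α) (hα : α ≤ 1 / 2)
    (V : Finset (Finset (Fin m))) (hV : V.Nonempty)
    (b : Fin k → Finset (Fin m)) (hb : IsSketch α V b)
    (a : Finset (Fin m)) (ha : a ∈ V) :
    ∑ i, (sketchX b i - 2 * α * (sketchX b i) ^ 2) + 2 * α * ∑ i ∈ a, sketchX b i
      ≥ (a.card : ℝ) - α * ((a.card : ℝ) + ∑ i, sketchX b i) / k := by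
  classical
  have hk0 : (0 : ℝ) < (k : ℝ) := by exact_mod_cast hk
  have hkR : (k : ℝ) ≠ 0 := ne_of_gt hk0
  set X : Fin m → ℝ := sketchX b with hX
  set χ : Fin m → ℝ := fun i => if i ∈ a then 1 else 0 with hχ
  set β : Fin k → Fin m → ℝ := fun j i => if i ∈ b j then 1 else 0 with hβ
  have hXdef : ∀ i, X i = (∑ j, β j i) / k := fun i => rfl
  -- effect of replacing coordinate j by a
  have hupd : ∀ j i, sketchX (Function.update b j a) i = X i + (χ i - β j i) / k := by
    intro j i
    have h1 : (fun j' => if i ∈ Function.update b j a j' then (1 : ℝ) else 0)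
        = Function.update (fun j' => β j' i) j (χ i) := by
      funext j'
      by_cases h : j' = j
      · subst h; simp [hχ, hβ]
      · simp [Function.update_of_ne h, hβ]
    show (∑ j', if i ∈ Function.update b j a j' then (1 : ℝ) else 0) / k = _
    rw [h1, Finset.sum_update_of_mem (Finset.mem_univ j), hXdef i]
    have h2 : ∑ j', β j' i = β j i + ∑ j' ∈ Finset.univ.erase j, β j' i :=
      (Finset.add_sum_erase _ _ (Finset.mem_univ j)).symm
    rw [h2, ← add_div, Finset.sdiff_singleton_eq_erase] at *
    ring
  -- optimality of b
  have hopt : ∀ j, sketchObj α (Function.update b j a) ≤ sketchObj α b := by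
    intro j
    refine hb.2 _ (fun j' => ?_)
    by_cases h : j' = j
    · subst h; simpa using ha
    · simpa [Function.update_of_ne h] using hb.1 j'
  have hsum : 0 ≤ ∑ j, (sketchObj α b - sketchObj α (Function.update b j a)) :=
    Finset.sum_nonneg fun j _ => sub_nonneg.mpr (hopt j)
  have hterm : ∀ j, sketchObj α b - sketchObj α (Function.update b j a)
      = ∑ i, (-((χ i - β j i) / k) + 2 * α * X i * ((χ i - β j i) / k)
          + α * ((χ i - β j i) / k) ^ 2) := by
    intro j
    unfold sketchObj
    rw [← Finset.sum_sub_distrib]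
    refine Finset.sum_congr rfl fun i _ => ?_
    rw [hupd j i]
    show X i - α * X i ^ 2 - _ = _
    ring
  have hd1 : ∀ i, ∑ j, ((χ i - β j i) / k) = χ i - X i := by
    intro i
    rw [← Finset.sum_div, Finset.sum_sub_distrib, Finset.sum_const, Finset.card_univ,
      Fintype.card_fin, hXdef i]
    field_simp
    ring
  have hd2 : ∀ i, ∑ j, ((χ i - β j i) / k) ^ 2 ≤ (χ i + X i) / k := by
    intro i
    have hbd : ∀ j, ((χ i - β j i) / k) ^ 2 ≤ (χ i + β j i) / k ^ 2 := by
      intro j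
      rw [div_pow]
      have h : (χ i - β j i) ^ 2 ≤ χ i + β j i := by
        simp only [hχ, hβ]
        by_cases h1 : i ∈ a <;> by_cases h2 : i ∈ b j <;> simp [h1, h2] <;> norm_num
      gcongr
    calc ∑ j, ((χ i - β j i) / k) ^ 2 ≤ ∑ j, (χ i + β j i) / k ^ 2 :=
          Finset.sum_le_sum fun j _ => hbd j
      _ = (χ i + X i) / k := by
          rw [← Finset.sum_div, Finset.sum_add_distrib, Finset.sum_const, Finset.card_univ,
            Fintype.card_fin, hXdef i]
          field_simp
          ring
  -- per-item bound after summing over j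
  have hinner : ∀ i : Fin m,
      ∑ j, (-((χ i - β j i) / k) + 2 * α * X i * ((χ i - β j i) / k)
          + α * ((χ i - β j i) / k) ^ 2)
        ≤ -(χ i - X i) + 2 * α * X i * (χ i - X i) + α * ((χ i + X i) / k) := by
    intro i
    rw [Finset.sum_add_distrib, Finset.sum_add_distrib, Finset.sum_neg_distrib,
      ← Finset.mul_sum, ← Finset.mul_sum, hd1 i]
    have := mul_le_mul_of_nonneg_left (hd2 i) (le_of_lt hα0)
    linarith
  have hH : 0 ≤ ∑ i, (-(χ i - X i) + 2 * α * X i * (χ i - X i) + α * ((χ i + X i) / k)) := by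
    have h1 : (0:ℝ) ≤ ∑ i, ∑ j, (-((χ i - β j i) / k) + 2 * α * X i * ((χ i - β j i) / k)
        + α * ((χ i - β j i) / k) ^ 2) := by
      calc (0:ℝ) ≤ ∑ j, (sketchObj α b - sketchObj α (Function.update b j a)) := hsum
        _ = ∑ j, ∑ i, (-((χ i - β j i) / k) + 2 * α * X i * ((χ i - β j i) / k)
              + α * ((χ i - β j i) / k) ^ 2) := Finset.sum_congr rfl fun j _ => hterm j
        _ = _ := Finset.sum_comm
    exact le_trans h1 (Finset.sum_le_sum fun i _ => hinner i)
  -- rewrite the χ-sums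
  have hcard : ∑ i, χ i = (a.card : ℝ) := by
    simp [hχ, Finset.sum_ite_mem, Finset.univ_inter]
  have hsel : ∑ i, X i * χ i = ∑ i ∈ a, X i := by
    simp [hχ, mul_ite, mul_one, mul_zero, Finset.sum_ite_mem, Finset.univ_inter]
  have hexp : ∑ i, (-(χ i - X i) + 2 * α * X i * (χ i - X i) + α * ((χ i + X i) / k))
      = (∑ i, X i) - (∑ i, χ i) + (2 * α) * (∑ i, X i * χ i) - (2 * α) * (∑ i, X i ^ 2)
        + (α / k) * ((∑ i, χ i) + (∑ i, X i)) := by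
    simp only [Finset.mul_sum, ← Finset.sum_add_distrib, ← Finset.sum_sub_distrib]
    exact Finset.sum_congr rfl fun i _ => by ring
  rw [hexp, hcard, hsel] at hH
  have hgoal : ∑ i, (X i - 2 * α * X i ^ 2) = (∑ i, X i) - (2 * α) * (∑ i, X i ^ 2) := by
    rw [Finset.sum_sub_distrib, ← Finset.mul_sum]
  rw [ge_iff_le, hgoal]
  have hdiv : α * ((a.card : ℝ) + ∑ i, X i) / k = (α / k) * ((a.card : ℝ) + ∑ i, X i) := by
    ring
  rw [hdiv]
  linarith
end

section
/- Let v be an XOS valuation on [m], let 0 < α ≤ 1/2, let k be a positive integer, and let (b_1,…,b_k) be a (k,α)-sketch of v. Let a be a clause of v and let a' be an additive valuation with a'(i) ≤ a(i) for all items i. Then, writing x_{i,u} = (1/k) ∑_{j=1}^k 1[b_j(i) ≥ u], we have ∑_{i=1}^m ( ∫_0^∞ (x_{i,u} − 2α x_{i,u}²) du + 2α ∫_0^{a'(i)} x_{i,u} du ) ≥ a'([m]) − 2α·v([m])/k. -/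
open Finset MeasureTheory

/-- `x_{i,u}`: the fraction of the `k` sketch clauses `b` whose value for item `i` is `≥ u`. -/
noncomputable def rX {m k : ℕ} (b : Fin k → Fin m → ℝ) (i : Fin m) (u : ℝ) : ℝ :=
  (∑ j, if u ≤ b j i then (1 : ℝ) else 0) / k

/-- The objective `∑ i ∫₀^∞ (x_{i,u} − α x_{i,u}²) du` that a `(k,α)`-sketch of an XOS
valuation maximizes. -/
noncomputable def rObj {m k : ℕ} (α : ℝ) (b : Fin k → Fin m → ℝ) : ℝ :=
  ∑ i, ∫ u in Set.Ioi (0 : ℝ), (rX b i u - α * (rX b i u) ^ 2)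

/-- `(C (σ 1),…,C (σ k))` is a `(k,α)`-sketch of the XOS valuation with clauses `C`:
it maximizes the objective over all k-tuples of clauses (repetitions allowed). -/
def IsSketchR {m t k : ℕ} (α : ℝ) (C : Fin (t + 1) → Fin m → ℝ)
    (σ : Fin k → Fin (t + 1)) : Prop :=
  ∀ τ : Fin k → Fin (t + 1), rObj α (fun j => C (τ j)) ≤ rObj α (fun j => C (σ j))

/-! ### Auxiliary material -/

/-- The step function `u ↦ 1[u ≤ c]`. -/
noncomputable def stp (c u : ℝ) : ℝ := if u ≤ c then 1 else 0

lemma stp_nonneg (c u : ℝ) : 0 ≤ stp c u := by unfold stp; split_ifs <;> norm_num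

lemma stp_le_one (c u : ℝ) : stp c u ≤ 1 := by unfold stp; split_ifs <;> norm_num

lemma stp_eq_zero {c u : ℝ} (h : c < u) : stp c u = 0 := by
  unfold stp; rw [if_neg (not_le.mpr h)]

lemma stp_meas (c : ℝ) : Measurable (stp c) := by
  have h : stp c = (Set.Iic c).indicator 1 := by
    ext u; by_cases h : u ≤ c <;> simp [stp, Set.indicator, h]
  rw [h]; exact measurable_one.indicator measurableSet_Iic

lemma stp_sq_diff (c d u : ℝ) : (stp c u - stp d u) ^ 2 ≤ stp c u + stp d u := by
  unfold stp; split_ifs <;> norm_num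

lemma integ_aux {g : ℝ → ℝ} (hg : Measurable g) (M B : ℝ)
    (hB : ∀ u, |g u| ≤ B) (h0 : ∀ u, M < u → g u = 0) :
    IntegrableOn g (Set.Ioi (0:ℝ)) := by
  have h1 : IntegrableOn g (Set.Ioc 0 (max M 0)) := by
    apply Measure.integrableOn_of_bounded (M := B)
    · simp
    · exact hg.aestronglyMeasurable
    · filter_upwards with u using (by simpa [Real.norm_eq_abs] using hB u)
  have h2 : IntegrableOn g (Set.Ioi (max M 0)) := by
    have he : Set.EqOn g 0 (Set.Ioi (max M 0)) :=
      fun u hu => h0 u (lt_of_le_of_lt (le_max_left M 0) hu)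
    exact (integrableOn_congr_fun he measurableSet_Ioi).mpr integrableOn_zero
  refine (h1.union h2).mono_set ?_
  intro u hu
  rcases le_or_gt u (max M 0) with h | h
  · exact Or.inl ⟨hu, h⟩
  · exact Or.inr h

lemma stp_mul_integral (c : ℝ) (h : ℝ → ℝ) :
    ∫ u in Set.Ioi (0:ℝ), stp c u * h u = ∫ u in Set.Ioc (0:ℝ) c, h u := by
  have e1 : Set.EqOn (fun u => stp c u * h u) ((Set.Iic c).indicator h)
      (Set.Ioi (0:ℝ)) := by
    intro u _; by_cases hc : u ≤ c <;> simp [stp, Set.indicator, hc]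
  rw [setIntegral_congr_fun measurableSet_Ioi e1, setIntegral_indicator measurableSet_Iic,
    Set.Ioi_inter_Iic]

lemma stp_integral (c : ℝ) (hc : 0 ≤ c) :
    ∫ u in Set.Ioi (0:ℝ), stp c u = c := by
  have h := stp_mul_integral c (fun _ => (1:ℝ))
  simp only [mul_one] at h
  rw [h]
  simp [Real.volume_Ioc, hc]

lemma exchange_sum {k : ℕ} (hk : (0:ℝ) < k) (α rr : ℝ) (ss : Fin k → ℝ) (x : ℝ)
    (hx : x = (∑ j, ss j) / k) :
    ∑ j0 : Fin k, ((x + (rr - ss j0)/k - α * (x + (rr - ss j0)/k)^2) - (x - α * x^2))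
      = (rr - x) * (1 - 2*α*x) - (α / k^2) * ∑ j0, (rr - ss j0)^2 := by
  have hk0 : (k:ℝ) ≠ 0 := ne_of_gt hk
  have h1 : ∀ j0 : Fin k, ((x + (rr - ss j0)/k - α * (x + (rr - ss j0)/k)^2) - (x - α * x^2))
      = (rr - ss j0)/k - (2*α*x) * ((rr - ss j0)/k) - (α/k^2) * (rr - ss j0)^2 := by
    intro j0; field_simp; ring
  rw [Finset.sum_congr rfl fun j0 _ => h1 j0, Finset.sum_sub_distrib, Finset.sum_sub_distrib,
    ← Finset.mul_sum, ← Finset.mul_sum]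
  simp only [← Finset.sum_div]
  rw [Finset.sum_sub_distrib]
  have hsum : ∑ _j : Fin k, rr = k * rr := by
    simp [Finset.sum_const, card_univ, nsmul_eq_mul]
  have hss : ∑ j, ss j = k * x := by rw [hx]; field_simp
  rw [hsum, hss]
  field_simp

lemma update_sum {k : ℕ} {β : Type*} (σ : Fin k → β) (j0 : Fin k) (l : β) (f : β → ℝ) :
    ∑ j, f (Function.update σ j0 l j) = ∑ j, f (σ j) + (f l - f (σ j0)) := by
  have e : ∀ j : Fin k, f (Function.update σ j0 l j)
      = f (σ j) + (if j = j0 then f l - f (σ j0) else 0) := by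
    intro j
    rcases eq_or_ne j j0 with h | h
    · subst h; rw [Function.update_self, if_pos rfl]; ring
    · rw [Function.update_of_ne h, if_neg h]; ring
  rw [Finset.sum_congr rfl fun j _ => e j, Finset.sum_add_distrib,
    Finset.sum_ite_eq' Finset.univ j0, if_pos (Finset.mem_univ j0)]

set_option maxHeartbeats 4000000 in
/-- the sketch inequality for general XOS valuations
(Lemma `lem:sketch` of the paper). -/
theorem stmt5 {m t k : ℕ} (hk : 0 < k) (α : ℝ) (hα0 : 0 < α) (hα : α ≤ 1 / 2)
    (C : Fin (t + 1) → Fin m → ℝ) (hC : ∀ l i, 0 ≤ C l i)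
    (σ : Fin k → Fin (t + 1)) (hσ : IsSketchR α C σ)
    (l : Fin (t + 1)) (a' : Fin m → ℝ) (ha'0 : ∀ i, 0 ≤ a' i) (ha' : ∀ i, a' i ≤ C l i) :
    ∑ i, ((∫ u in Set.Ioi (0 : ℝ),
            (rX (fun j => C (σ j)) i u - 2 * α * (rX (fun j => C (σ j)) i u) ^ 2))
          + 2 * α * ∫ u in Set.Ioc (0 : ℝ) (a' i), rX (fun j => C (σ j)) i u)
      ≥ (∑ i, a' i) - 2 * α * xosVal C Finset.univ / k := by
  have hk' : (0:ℝ) < k := by exact_mod_cast hk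
  obtain ⟨v, hv⟩ : ∃ v, v = xosVal C Finset.univ := ⟨_, rfl⟩
  obtain ⟨X, hX⟩ : ∃ X, X = rX (fun j => C (σ j)) := ⟨_, rfl⟩
  rw [← hv, ← hX]
  -- basic facts about X
  have hXe : ∀ i u, X i u = (∑ j, stp (C (σ j) i) u) / k := by
    intro i u; rw [hX]; rfl
  have hX0 : ∀ i u, 0 ≤ X i u := by
    intro i u; rw [hXe]
    exact div_nonneg (Finset.sum_nonneg fun j _ => stp_nonneg _ _) hk'.le
  have hX1 : ∀ i u, X i u ≤ 1 := by
    intro i u; rw [hXe, div_le_one hk']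
    calc ∑ j, stp (C (σ j) i) u ≤ ∑ _j : Fin k, (1:ℝ) :=
          Finset.sum_le_sum fun j _ => stp_le_one _ _
      _ = k := by simp
  have mX : ∀ i, Measurable (X i) := by
    intro i
    have : X i = fun u => (∑ j, stp (C (σ j) i) u) / (k:ℝ) := funext fun u => hXe i u
    rw [this]
    exact (Finset.measurable_sum univ fun j _ => stp_meas _).div_const _
  -- the bound M i beyond which everything vanishes
  obtain ⟨M, hM⟩ : ∃ M : Fin m → ℝ, M = fun i => C l i + ∑ j, C (σ j) i := ⟨_, rfl⟩
  have hlM : ∀ i, C l i ≤ M i := by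
    intro i; simp only [hM]
    have : (0:ℝ) ≤ ∑ j, C (σ j) i := Finset.sum_nonneg fun j _ => hC _ _
    linarith
  have hjM : ∀ i (j : Fin k), C (σ j) i ≤ M i := by
    intro i j; simp only [hM]
    have := Finset.single_le_sum (f := fun j => C (σ j) i) (fun j _ => hC _ _) (mem_univ j)
    have := hC l i
    linarith
  have hMs : ∀ i (j : Fin k) u, M i < u → stp (C (σ j) i) u = 0 :=
    fun i j u hu => stp_eq_zero (lt_of_le_of_lt (hjM i j) hu)
  have hMr : ∀ i u, M i < u → stp (C l i) u = 0 :=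
    fun i u hu => stp_eq_zero (lt_of_le_of_lt (hlM i) hu)
  have hMX : ∀ i u, M i < u → X i u = 0 := by
    intro i u hu; rw [hXe]
    rw [Finset.sum_congr rfl fun j _ => hMs i j u hu]
    simp
  -- integrability of all the integrands we need
  have I1 : ∀ i, IntegrableOn (fun u => X i u - α * X i u ^ 2) (Set.Ioi (0:ℝ)) := by
    intro i
    refine integ_aux ((mX i).sub (((mX i).pow_const 2).const_mul α)) (M i) 10 ?_ ?_
    · intro u
      have h0 := hX0 i u; have h1 := hX1 i u
      rw [abs_le]; constructor <;> nlinarith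
    · intro u hu; rw [hMX i u hu]; ring
  have I1' : ∀ i (j0 : Fin k), IntegrableOn
      (fun u => (X i u + (stp (C l i) u - stp (C (σ j0) i) u) / k)
        - α * (X i u + (stp (C l i) u - stp (C (σ j0) i) u) / k) ^ 2) (Set.Ioi (0:ℝ)) := by
    intro i j0
    have mY : Measurable fun u => X i u + (stp (C l i) u - stp (C (σ j0) i) u) / k :=
      (mX i).add (((stp_meas _).sub (stp_meas _)).div_const _)
    refine integ_aux (mY.sub ((mY.pow_const 2).const_mul α)) (M i) 10 ?_ ?_
    · intro u
      have h0 := hX0 i u; have h1 := hX1 i u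
      have hr0 := stp_nonneg (C l i) u; have hr1 := stp_le_one (C l i) u
      have hs0 := stp_nonneg (C (σ j0) i) u; have hs1 := stp_le_one (C (σ j0) i) u
      have hk1 : (1:ℝ) ≤ k := by exact_mod_cast hk
      have hd : |(stp (C l i) u - stp (C (σ j0) i) u) / k| ≤ 1 := by
        rw [abs_div, abs_of_pos hk', div_le_one hk']
        rw [abs_le]; constructor <;> nlinarith
      have hd' := abs_le.mp hd
      rw [abs_le]; constructor <;> nlinarith [hd'.1, hd'.2]
    · intro u hu
      rw [hMX i u hu, hMs i j0 u hu, hMr i u hu]; ring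
  have I2 : ∀ i, IntegrableOn
      (fun u => (stp (C l i) u - X i u) * (1 - 2 * α * X i u)) (Set.Ioi (0:ℝ)) := by
    intro i
    refine integ_aux (((stp_meas _).sub (mX i)).mul
      (measurable_const.sub ((mX i).const_mul (2*α)))) (M i) 10 ?_ ?_
    · intro u
      have h0 := hX0 i u; have h1 := hX1 i u
      have hr0 := stp_nonneg (C l i) u; have hr1 := stp_le_one (C l i) u
      have hq0 : 0 ≤ 1 - 2*α*X i u := by nlinarith
      have hq1 : 1 - 2*α*X i u ≤ 1 := by nlinarith
      rw [abs_le]; constructor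
      · nlinarith [mul_nonneg (show (0:ℝ) ≤ stp (C l i) u - X i u + 1 by linarith) hq0]
      · nlinarith [mul_nonneg (show (0:ℝ) ≤ 1 - (stp (C l i) u - X i u) by linarith) hq0]
    · intro u hu; rw [hMX i u hu, hMr i u hu]; ring
  have I3 : ∀ i (j0 : Fin k), IntegrableOn
      (fun u => (stp (C l i) u - stp (C (σ j0) i) u) ^ 2) (Set.Ioi (0:ℝ)) := by
    intro i j0
    refine integ_aux (((stp_meas _).sub (stp_meas _)).pow_const 2) (M i) 10 ?_ ?_
    · intro u
      have hr0 := stp_nonneg (C l i) u; have hr1 := stp_le_one (C l i) u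
      have hs0 := stp_nonneg (C (σ j0) i) u; have hs1 := stp_le_one (C (σ j0) i) u
      rw [abs_le]; constructor <;> nlinarith
    · intro u hu; rw [hMs i j0 u hu, hMr i u hu]; ring
  have I4 : ∀ i, IntegrableOn
      (fun u => stp (C l i) u * (1 - 2 * α * X i u)) (Set.Ioi (0:ℝ)) := by
    intro i
    refine integ_aux ((stp_meas _).mul
      (measurable_const.sub ((mX i).const_mul (2*α)))) (M i) 10 ?_ ?_
    · intro u
      have h0 := hX0 i u; have h1 := hX1 i u
      have hr0 := stp_nonneg (C l i) u; have hr1 := stp_le_one (C l i) u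
      have hq0 : 0 ≤ 1 - 2*α*X i u := by nlinarith
      have hq1 : 1 - 2*α*X i u ≤ 1 := by nlinarith
      rw [abs_le]; constructor
      · nlinarith [mul_nonneg hr0 hq0]
      · nlinarith [mul_nonneg (show (0:ℝ) ≤ 1 - stp (C l i) u by linarith) hq0,
          mul_nonneg hr0 (show (0:ℝ) ≤ 1 - (1 - 2*α*X i u) by linarith)]
    · intro u hu; rw [hMr i u hu]; ring
  have I5 : ∀ i, IntegrableOn (fun u => X i u - 2 * α * X i u ^ 2) (Set.Ioi (0:ℝ)) := by
    intro i
    refine integ_aux ((mX i).sub (((mX i).pow_const 2).const_mul (2*α))) (M i) 10 ?_ ?_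
    · intro u
      have h0 := hX0 i u; have h1 := hX1 i u
      rw [abs_le]; constructor <;> nlinarith
    · intro u hu; rw [hMX i u hu]; ring
  have Ir : ∀ i, IntegrableOn (fun u => stp (C l i) u) (Set.Ioi (0:ℝ)) := by
    intro i
    refine integ_aux (stp_meas _) (M i) 10 ?_ ?_
    · intro u
      have hr0 := stp_nonneg (C l i) u; have hr1 := stp_le_one (C l i) u
      rw [abs_le]; constructor <;> nlinarith
    · intro u hu; exact hMr i u hu
  have Is : ∀ i (j0 : Fin k), IntegrableOn (fun u => stp (C (σ j0) i) u) (Set.Ioi (0:ℝ)) := by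
    intro i j0
    refine integ_aux (stp_meas _) (M i) 10 ?_ ?_
    · intro u
      have hr0 := stp_nonneg (C (σ j0) i) u; have hr1 := stp_le_one (C (σ j0) i) u
      rw [abs_le]; constructor <;> nlinarith
    · intro u hu; exact hMs i j0 u hu
  -- the clause-exchange identity
  have hxt : ∀ (j0 : Fin k) (i : Fin m) (u : ℝ),
      rX (fun j => C (Function.update σ j0 l j)) i u
        = X i u + (stp (C l i) u - stp (C (σ j0) i) u) / k := by
    intro j0 i u
    have h0 : rX (fun j => C (Function.update σ j0 l j)) i u
        = (∑ j, stp (C (Function.update σ j0 l j) i) u) / k := rfl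
    rw [h0, update_sum σ j0 l (fun c => stp (C c i) u), add_div, ← hXe]
  -- Step A: per-exchange inequality from the sketch property
  have hA : ∀ j0 : Fin k,
      ∑ i, ∫ u in Set.Ioi (0:ℝ),
        (((X i u + (stp (C l i) u - stp (C (σ j0) i) u) / k)
            - α * (X i u + (stp (C l i) u - stp (C (σ j0) i) u) / k) ^ 2)
          - (X i u - α * X i u ^ 2)) ≤ 0 := by
    intro j0
    have h := hσ (Function.update σ j0 l)
    rw [rObj, rObj] at h
    rw [← hX] at h
    simp only [hxt j0] at h
    have e : ∀ i : Fin m, (∫ u in Set.Ioi (0:ℝ),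
        (((X i u + (stp (C l i) u - stp (C (σ j0) i) u) / k)
            - α * (X i u + (stp (C l i) u - stp (C (σ j0) i) u) / k) ^ 2)
          - (X i u - α * X i u ^ 2)))
        = (∫ u in Set.Ioi (0:ℝ), ((X i u + (stp (C l i) u - stp (C (σ j0) i) u) / k)
            - α * (X i u + (stp (C l i) u - stp (C (σ j0) i) u) / k) ^ 2))
          - ∫ u in Set.Ioi (0:ℝ), (X i u - α * X i u ^ 2) :=
      fun i => integral_sub (I1' i j0) (I1 i)
    rw [Finset.sum_congr rfl fun i _ => e i, Finset.sum_sub_distrib]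
    linarith
  -- Step B: sum over all exchanges, and simplify pointwise
  have hsum_s : ∀ i u, ∑ j, stp (C (σ j) i) u = k * X i u := by
    intro i u; rw [hXe]; field_simp
  have hpt : ∀ i u, (∑ j0 : Fin k,
      (((X i u + (stp (C l i) u - stp (C (σ j0) i) u) / k)
          - α * (X i u + (stp (C l i) u - stp (C (σ j0) i) u) / k) ^ 2)
        - (X i u - α * X i u ^ 2)))
      = (stp (C l i) u - X i u) * (1 - 2 * α * X i u)
        - (α / k ^ 2) * ∑ j0, (stp (C l i) u - stp (C (σ j0) i) u) ^ 2 := by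
    intro i u
    exact exchange_sum hk' α (stp (C l i) u) (fun j => stp (C (σ j) i) u) (X i u) (hXe i u)
  have KEY1 : ∑ i, ((∫ u in Set.Ioi (0:ℝ), (stp (C l i) u - X i u) * (1 - 2 * α * X i u))
      - (α / k ^ 2) * ∑ j0, ∫ u in Set.Ioi (0:ℝ), (stp (C l i) u - stp (C (σ j0) i) u) ^ 2)
      ≤ 0 := by
    have h0 : ∑ j0 : Fin k, ∑ i, ∫ u in Set.Ioi (0:ℝ),
        (((X i u + (stp (C l i) u - stp (C (σ j0) i) u) / k)
            - α * (X i u + (stp (C l i) u - stp (C (σ j0) i) u) / k) ^ 2)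
          - (X i u - α * X i u ^ 2)) ≤ 0 :=
      Finset.sum_nonpos fun j0 _ => hA j0
    rw [Finset.sum_comm] at h0
    have h1 : ∀ i : Fin m, ∑ j0 : Fin k, (∫ u in Set.Ioi (0:ℝ),
        (((X i u + (stp (C l i) u - stp (C (σ j0) i) u) / k)
            - α * (X i u + (stp (C l i) u - stp (C (σ j0) i) u) / k) ^ 2)
          - (X i u - α * X i u ^ 2)))
        = (∫ u in Set.Ioi (0:ℝ), (stp (C l i) u - X i u) * (1 - 2 * α * X i u))
          - (α / k ^ 2) * ∑ j0, ∫ u in Set.Ioi (0:ℝ),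
              (stp (C l i) u - stp (C (σ j0) i) u) ^ 2 := by
      intro i
      calc ∑ j0 : Fin k, (∫ u in Set.Ioi (0:ℝ),
          (((X i u + (stp (C l i) u - stp (C (σ j0) i) u) / k)
              - α * (X i u + (stp (C l i) u - stp (C (σ j0) i) u) / k) ^ 2)
            - (X i u - α * X i u ^ 2)))
          = ∫ u in Set.Ioi (0:ℝ), ∑ j0 : Fin k,
            (((X i u + (stp (C l i) u - stp (C (σ j0) i) u) / k)
                - α * (X i u + (stp (C l i) u - stp (C (σ j0) i) u) / k) ^ 2)
              - (X i u - α * X i u ^ 2)) :=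
            (integral_finset_sum univ (fun j0 _ => (I1' i j0).sub (I1 i))).symm
        _ = ∫ u in Set.Ioi (0:ℝ), ((stp (C l i) u - X i u) * (1 - 2 * α * X i u)
              - (α / k ^ 2) * ∑ j0, (stp (C l i) u - stp (C (σ j0) i) u) ^ 2) :=
            integral_congr_ae (by filter_upwards with u using hpt i u)
        _ = (∫ u in Set.Ioi (0:ℝ), (stp (C l i) u - X i u) * (1 - 2 * α * X i u))
              - (α / k ^ 2) * ∑ j0, ∫ u in Set.Ioi (0:ℝ),
                  (stp (C l i) u - stp (C (σ j0) i) u) ^ 2 := by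
            rw [integral_sub (I2 i)
              ((integrable_finset_sum univ fun j0 _ => I3 i j0).const_mul (α / k ^ 2))]
            congr 1
            rw [integral_const_mul, integral_finset_sum univ fun j0 _ => I3 i j0]
    rw [← Finset.sum_congr rfl fun i _ => h1 i]
    exact h0
  -- bound the error term
  have hDj : ∀ i (j0 : Fin k), (∫ u in Set.Ioi (0:ℝ),
      (stp (C l i) u - stp (C (σ j0) i) u) ^ 2) ≤ C l i + C (σ j0) i := by
    intro i j0
    have hmono : (∫ u in Set.Ioi (0:ℝ), (stp (C l i) u - stp (C (σ j0) i) u) ^ 2)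
        ≤ ∫ u in Set.Ioi (0:ℝ), (stp (C l i) u + stp (C (σ j0) i) u) :=
      integral_mono (I3 i j0) ((Ir i).add (Is i j0)) fun u => stp_sq_diff _ _ u
    have hadd : (∫ u in Set.Ioi (0:ℝ), (stp (C l i) u + stp (C (σ j0) i) u))
        = C l i + C (σ j0) i := by
      rw [integral_add (Ir i) (Is i j0), stp_integral _ (hC l i), stp_integral _ (hC (σ j0) i)]
    linarith
  have hval : ∀ j, aval (C j) Finset.univ ≤ v := by
    intro j; rw [hv]
    exact Finset.le_sup' (fun j => aval (C j) Finset.univ) (mem_univ j)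
  have KEY3 : ∑ i, (∫ u in Set.Ioi (0:ℝ), (stp (C l i) u - X i u) * (1 - 2 * α * X i u))
      ≤ 2 * α * v / k := by
    have hE2 : ∑ i, (α / k ^ 2) * ∑ j0, (∫ u in Set.Ioi (0:ℝ),
        (stp (C l i) u - stp (C (σ j0) i) u) ^ 2) ≤ 2 * α * v / k := by
      have step1 : ∑ i, (α / k ^ 2) * ∑ j0, (∫ u in Set.Ioi (0:ℝ),
          (stp (C l i) u - stp (C (σ j0) i) u) ^ 2)
          ≤ ∑ i, (α / k ^ 2) * ∑ j0 : Fin k, (C l i + C (σ j0) i) := by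
        refine Finset.sum_le_sum fun i _ => ?_
        refine mul_le_mul_of_nonneg_left ?_ (by positivity)
        exact Finset.sum_le_sum fun j0 _ => hDj i j0
      have step2 : ∑ i, (α / k ^ 2) * ∑ j0 : Fin k, (C l i + C (σ j0) i)
          = (α / k ^ 2) * ∑ j0 : Fin k, (aval (C l) Finset.univ + aval (C (σ j0)) Finset.univ) := by
        rw [← Finset.mul_sum, Finset.sum_comm]
        congr 1
        refine Finset.sum_congr rfl fun j0 _ => ?_
        rw [Finset.sum_add_distrib]
        rfl
      have step3 : ∑ j0 : Fin k, (aval (C l) Finset.univ + aval (C (σ j0)) Finset.univ)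
          ≤ ∑ _j0 : Fin k, (2 * v) := by
        refine Finset.sum_le_sum fun j0 _ => ?_
        have h1 := hval l; have h2 := hval (σ j0)
        linarith
      have step4 : (∑ _j0 : Fin k, (2 * v)) = k * (2 * v) := by
        rw [Finset.sum_const, card_univ, Fintype.card_fin]; ring
      have hαk : 0 ≤ α / (k:ℝ) ^ 2 := by positivity
      calc ∑ i, (α / k ^ 2) * ∑ j0, (∫ u in Set.Ioi (0:ℝ),
            (stp (C l i) u - stp (C (σ j0) i) u) ^ 2)
          ≤ (α / k ^ 2) * ∑ j0 : Fin k, (aval (C l) Finset.univ + aval (C (σ j0)) Finset.univ) := by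
            rw [← step2]; exact step1
        _ ≤ (α / k ^ 2) * (k * (2 * v)) := by
            rw [← step4]; exact mul_le_mul_of_nonneg_left step3 hαk
        _ = 2 * α * v / k := by field_simp
    have hsplit : ∑ i, ((∫ u in Set.Ioi (0:ℝ), (stp (C l i) u - X i u) * (1 - 2 * α * X i u))
        - (α / k ^ 2) * ∑ j0, ∫ u in Set.Ioi (0:ℝ), (stp (C l i) u - stp (C (σ j0) i) u) ^ 2)
        = (∑ i, (∫ u in Set.Ioi (0:ℝ), (stp (C l i) u - X i u) * (1 - 2 * α * X i u)))
          - ∑ i, (α / k ^ 2) * ∑ j0, ∫ u in Set.Ioi (0:ℝ),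
              (stp (C l i) u - stp (C (σ j0) i) u) ^ 2 := Finset.sum_sub_distrib _ _
    rw [hsplit] at KEY1
    linarith
  -- Step 2: lower bound each summand
  have h2 : ∀ i, a' i - 2 * α * (∫ u in Set.Ioc (0:ℝ) (a' i), X i u)
      - (∫ u in Set.Ioi (0:ℝ), (X i u - 2 * α * X i u ^ 2))
      ≤ ∫ u in Set.Ioi (0:ℝ), (stp (C l i) u - X i u) * (1 - 2 * α * X i u) := by
    intro i
    have e1 : (∫ u in Set.Ioi (0:ℝ), (stp (C l i) u - X i u) * (1 - 2 * α * X i u))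
        = (∫ u in Set.Ioi (0:ℝ), stp (C l i) u * (1 - 2 * α * X i u))
          - ∫ u in Set.Ioi (0:ℝ), (X i u - 2 * α * X i u ^ 2) := by
      have e : (fun u => (stp (C l i) u - X i u) * (1 - 2 * α * X i u))
          = fun u => stp (C l i) u * (1 - 2 * α * X i u) - (X i u - 2 * α * X i u ^ 2) := by
        funext u; ring
      rw [e]
      exact integral_sub (I4 i) (I5 i)
    have e2 : (∫ u in Set.Ioi (0:ℝ), stp (C l i) u * (1 - 2 * α * X i u))
        = ∫ u in Set.Ioc (0:ℝ) (C l i), (1 - 2 * α * X i u) :=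
      stp_mul_integral (C l i) (fun u => 1 - 2 * α * X i u)
    have IntIoc : IntegrableOn (fun u => 1 - 2 * α * X i u) (Set.Ioc (0:ℝ) (C l i)) := by
      apply Measure.integrableOn_of_bounded (M := 1) (measure_Ioc_lt_top).ne
        (measurable_const.sub ((mX i).const_mul (2*α))).aestronglyMeasurable
      filter_upwards with u
      have h0 := hX0 i u; have h1 := hX1 i u
      simp only [Pi.sub_apply]
      rw [Real.norm_eq_abs, abs_le]; constructor <;> nlinarith
    have hnonneg : (0:ℝ → ℝ) ≤ᵐ[volume.restrict (Set.Ioc (0:ℝ) (C l i))]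
        fun u => 1 - 2 * α * X i u := by
      filter_upwards with u
      have h0 := hX0 i u; have h1 := hX1 i u
      simp only [Pi.zero_apply]
      nlinarith
    have hmono : (∫ u in Set.Ioc (0:ℝ) (a' i), (1 - 2 * α * X i u))
        ≤ ∫ u in Set.Ioc (0:ℝ) (C l i), (1 - 2 * α * X i u) :=
      setIntegral_mono_set IntIoc hnonneg
        (HasSubset.Subset.eventuallyLE (Set.Ioc_subset_Ioc_right (ha' i)))
    have IXa : IntegrableOn (fun u => 2 * α * X i u) (Set.Ioc (0:ℝ) (a' i)) := by
      apply Measure.integrableOn_of_bounded (M := 2 * α) (measure_Ioc_lt_top).ne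
        ((mX i).const_mul (2*α)).aestronglyMeasurable
      filter_upwards with u
      have h0 := hX0 i u; have h1 := hX1 i u
      rw [Real.norm_eq_abs, abs_le]; constructor <;> nlinarith
    have e3 : (∫ u in Set.Ioc (0:ℝ) (a' i), (1 - 2 * α * X i u))
        = a' i - 2 * α * ∫ u in Set.Ioc (0:ℝ) (a' i), X i u := by
      rw [integral_sub ((integrableOn_const (C := (1:ℝ)) (μ := volume) measure_Ioc_lt_top.ne :
        IntegrableOn (fun _ => (1:ℝ)) (Set.Ioc (0:ℝ) (a' i)) volume)) IXa]
      rw [integral_const_mul]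
      congr 1
      simp [Real.volume_Ioc, ha'0 i]
    linarith
  -- assemble everything

  have hsum2 : ∑ i, (a' i - 2 * α * (∫ u in Set.Ioc (0:ℝ) (a' i), X i u)
      - (∫ u in Set.Ioi (0:ℝ), (X i u - 2 * α * X i u ^ 2))) ≤ 2 * α * v / k :=
    le_trans (Finset.sum_le_sum fun i _ => h2 i) KEY3
  have expand : ∑ i, (a' i - 2 * α * (∫ u in Set.Ioc (0:ℝ) (a' i), X i u)
      - (∫ u in Set.Ioi (0:ℝ), (X i u - 2 * α * X i u ^ 2)))
      = (∑ i, a' i) - (∑ i, 2 * α * (∫ u in Set.Ioc (0:ℝ) (a' i), X i u))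
        - ∑ i, (∫ u in Set.Ioi (0:ℝ), (X i u - 2 * α * X i u ^ 2)) := by
    rw [Finset.sum_sub_distrib, Finset.sum_sub_distrib]
  rw [expand] at hsum2
  have expand2 : ∑ i, ((∫ u in Set.Ioi (0:ℝ), (X i u - 2 * α * X i u ^ 2))
      + 2 * α * ∫ u in Set.Ioc (0:ℝ) (a' i), X i u)
      = (∑ i, (∫ u in Set.Ioi (0:ℝ), (X i u - 2 * α * X i u ^ 2)))
        + ∑ i, 2 * α * (∫ u in Set.Ioc (0:ℝ) (a' i), X i u) := Finset.sum_add_distrib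
  rw [expand2]
  linarith
end

section
/- Let v1 and v2 be binary XOS valuations on [m], let k be a positive integer, and let (b_1,…,b_k) be a (k,1/2)-sketch of v1. Then (1/k) ∑_{j=1}^k SW*(b_j, v2) ≥ (3/4 − 1/k) · SW*(v1, v2). (Consequently, the simultaneous randomized protocol in which Alice reports a uniformly random clause of her (k,1/2)-sketch and the auctioneer gives Alice exactly the items in that clause is a (3/4 − 1/k)-approximation in expectation to the 2-party BXOS allocation problem.) -/
open Finset

set_option maxHeartbeats 1000000 in
/-- if `(b_1,…,b_k)` is a `(k,1/2)`-sketch of the binary XOS valuation `v1`,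
then `(1/k) ∑_j SW*(b_j, v2) ≥ (3/4 − 1/k) · SW*(v1, v2)`; this is the
`(3/4 − 1/k)`-approximation guarantee of the simultaneous randomized protocol. -/
theorem stmt6 {m k : ℕ} (hk : 0 < k)
    (V1 V2 : Finset (Finset (Fin m))) (hV1 : V1.Nonempty) (hV2 : V2.Nonempty)
    (b : Fin k → Finset (Fin m)) (hb : IsSketch (1 / 2 : ℝ) V1 b) :
    (1 / k : ℝ) * ∑ j, (swB (bval (b j)) (xval V2) : ℝ)
      ≥ (3 / 4 - 1 / k : ℝ) * (swB (xval V1) (xval V2) : ℝ) := by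
  classical
  have hk0 : (0:ℝ) < (k:ℝ) := by exact_mod_cast hk
  have hkne : (k:ℝ) ≠ 0 := ne_of_gt hk0
  have hk1 : (1:ℝ) ≤ (k:ℝ) := by exact_mod_cast hk
  -- the optimal allocation S, Alice's optimal clause A, Bob's optimal clause B
  obtain ⟨S, -, hS⟩ := Finset.exists_mem_eq_sup (univ : Finset (Finset (Fin m)))
    univ_nonempty (fun T : Finset (Fin m) => xval V1 T + xval V2 Tᶜ)
  obtain ⟨A, hAV, hA⟩ := Finset.exists_mem_eq_sup V1 hV1 (fun C => (C ∩ S).card)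
  obtain ⟨B, hBV, hB⟩ := Finset.exists_mem_eq_sup V2 hV2 (fun C => (C ∩ Sᶜ).card)
  set B' : Finset (Fin m) := B ∩ Sᶜ with hB'def
  -- shorthand for x, indicators
  set x : Fin m → ℝ := sketchX b with hxdef
  set βf : Fin k → Fin m → ℝ := fun j i => if i ∈ b j then (1:ℝ) else 0 with hβdef
  set aA : Fin m → ℝ := fun i => if i ∈ A then (1:ℝ) else 0 with haAdef
  set δ : Fin k → Fin m → ℝ := fun j i => (aA i - βf j i) / k with hδdef
  set p : Fin m → ℝ := fun i => if i ∈ A ∩ S then (1:ℝ) else 0 with hpdef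
  set q : Fin m → ℝ := fun i => if i ∈ B' then (1:ℝ) else 0 with hqdef
  set e : Fin m → ℝ := fun i => if i ∈ A \ (S ∪ B') then (1:ℝ) else 0 with hedef
  set r : Fin m → ℝ := fun i => if i ∈ (A ∪ B')ᶜ then (1:ℝ) else 0 with hrdef
  obtain ⟨ε, hεdef⟩ : ∃ e : ℝ, e = 1 / (2 * (k:ℝ)) := ⟨_, rfl⟩
  have hε0 : 0 < ε := by rw [hεdef]; positivity
  have hεhalf : ε ≤ 1/2 := by
    rw [hεdef, div_le_div_iff₀ (by linarith) (by norm_num)]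
    linarith
  have hxk : ∀ i, ∑ j, βf j i = (k:ℝ) * x i := by
    intro i
    have : x i = (∑ j, βf j i) / k := rfl
    rw [this, mul_div_cancel₀ _ hkne]
  have hx0 : ∀ i, 0 ≤ x i := by
    intro i
    have : x i = (∑ j, βf j i) / k := rfl
    rw [this]
    apply div_nonneg _ (le_of_lt hk0)
    apply Finset.sum_nonneg
    intro j _
    simp only [hβdef]
    split <;> norm_num
  have hx1 : ∀ i, x i ≤ 1 := by
    intro i
    have hxi : x i = (∑ j, βf j i) / k := rfl
    rw [hxi, div_le_one hk0]
    calc (∑ j, βf j i) ≤ ∑ j : Fin k, (1:ℝ) := by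
          apply Finset.sum_le_sum; intro j _
          simp only [hβdef]; split <;> norm_num
      _ = (k:ℝ) := by simp
  -- the sketch optimality against replacing one clause by A
  have key : ∀ j : Fin k, sketchObj (1/2) (Function.update b j A) ≤ sketchObj (1/2) b := by
    intro j
    apply hb.2
    intro j'
    by_cases h : j' = j
    · subst h; rw [Function.update_self]; exact hAV
    · rw [Function.update_of_ne h]; exact hb.1 j'
  have hupd : ∀ (j : Fin k) (i : Fin m),
      sketchX (Function.update b j A) i = x i + δ j i := by
    intro j i
    have hfun : (fun j' => if i ∈ Function.update b j A j' then (1:ℝ) else 0)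
        = Function.update (fun j' => if i ∈ b j' then (1:ℝ) else 0) j
            (if i ∈ A then (1:ℝ) else 0) := by
      funext j'
      by_cases h : j' = j
      · subst h; rw [Function.update_self, Function.update_self]
      · rw [Function.update_of_ne h, Function.update_of_ne h]
    have hsd : ∑ j' ∈ ((univ : Finset (Fin k)) \ {j}), (if i ∈ b j' then (1:ℝ) else 0)
        = (∑ j', if i ∈ b j' then (1:ℝ) else 0) - (if i ∈ b j then (1:ℝ) else 0) := by
      rw [Finset.sum_sdiff_eq_sub (Finset.singleton_subset_iff.2 (mem_univ j)),
        Finset.sum_singleton]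
    show (∑ j', if i ∈ Function.update b j A j' then (1:ℝ) else 0) / k = x i + δ j i
    rw [hfun, Finset.sum_update_of_mem (mem_univ j), hsd]
    have hxi : x i = (∑ j', if i ∈ b j' then (1:ℝ) else 0) / k := rfl
    have hδi : δ j i = ((if i ∈ A then (1:ℝ) else 0) - (if i ∈ b j then (1:ℝ) else 0)) / k :=
      rfl
    rw [hxi, hδi]
    ring
  -- per-j inequality, rearranged
  have hper : ∀ j : Fin k,
      0 ≤ ∑ i, (-(1 - x i) * δ j i + (δ j i)^2 / 2) := by
    intro j
    have h := key j
    unfold sketchObj at h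
    have h2 : ∀ i ∈ (univ : Finset (Fin m)),
        sketchX (Function.update b j A) i - (1/2) * (sketchX (Function.update b j A) i)^2
        = (sketchX b i - (1/2) * (sketchX b i)^2)
          - (-(1 - x i) * δ j i + (δ j i)^2 / 2) := by
      intro i _
      rw [hupd j i]
      have hxi : sketchX b i = x i := rfl
      rw [hxi]; ring
    rw [Finset.sum_congr rfl h2, Finset.sum_sub_distrib] at h
    linarith
  -- sum over j, swap
  have h0 : 0 ≤ ∑ i, ∑ j, (-(1 - x i) * δ j i + (δ j i)^2 / 2) := by
    rw [Finset.sum_comm]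
    exact Finset.sum_nonneg fun j _ => hper j
  -- evaluate the inner sum
  have hinner : ∀ i ∈ (univ : Finset (Fin m)),
      ∑ j, (-(1 - x i) * δ j i + (δ j i)^2 / 2)
      = -((aA i - x i) * (1 - x i) - ε * (aA i - 2 * aA i * x i + x i)) := by
    intro i _
    have hβsq : ∀ j : Fin k, (βf j i)^2 = βf j i := by
      intro j; simp only [hβdef]; split <;> norm_num
    have hasq : (aA i)^2 = aA i := by
      simp only [haAdef]; split <;> norm_num
    have hδ1 : ∑ j, δ j i = aA i - x i := by
      have : ∀ j : Fin k, δ j i = (aA i - βf j i) / (k:ℝ) := fun j => rfl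
      rw [Finset.sum_congr rfl (fun j _ => this j), ← Finset.sum_div,
        Finset.sum_sub_distrib, Finset.sum_const, card_univ, Fintype.card_fin,
        hxk i, nsmul_eq_mul]
      field_simp
    have hδ2 : ∑ j, (δ j i)^2 = (aA i - 2 * aA i * x i + x i) / k := by
      have hterm : ∀ j : Fin k, (δ j i)^2
          = (aA i - 2 * aA i * βf j i + βf j i) / (k:ℝ)^2 := by
        intro j
        have h1 : δ j i = (aA i - βf j i) / (k:ℝ) := rfl
        rw [h1, div_pow]
        congr 1
        have h2 : (aA i - βf j i)^2 = (aA i)^2 - 2 * aA i * βf j i + (βf j i)^2 := by ring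
        rw [h2, hasq, hβsq j]
      rw [Finset.sum_congr rfl (fun j _ => hterm j), ← Finset.sum_div,
        Finset.sum_add_distrib, Finset.sum_sub_distrib, Finset.sum_const, card_univ,
        Fintype.card_fin, ← Finset.mul_sum, hxk i, nsmul_eq_mul]
      field_simp
    have hA1 : ∑ j, -(1 - x i) * δ j i = -(1 - x i) * (aA i - x i) := by
      rw [← Finset.mul_sum, hδ1]
    have hA2 : ∑ j, (δ j i)^2 / 2 = ((aA i - 2 * aA i * x i + x i) / k) / 2 := by
      rw [← Finset.sum_div, hδ2]
    rw [Finset.sum_add_distrib, hA1, hA2, hεdef]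
    field_simp
    ring
  rw [Finset.sum_congr rfl hinner] at h0
  have hC : ∑ i, ((aA i - x i) * (1 - x i) - ε * (aA i - 2 * aA i * x i + x i)) ≤ 0 := by
    rw [Finset.sum_neg_distrib] at h0
    linarith
  -- per-item bound M i ≤ C i
  have hpt : ∀ i ∈ (univ : Finset (Fin m)),
      (1 - ε) * (p i * (1 - x i)) - p i / 4 - (1/4 + ε) * q i - (1 + ε) * (r i * x i)
        - e i * x i
      ≤ (aA i - x i) * (1 - x i) - ε * (aA i - 2 * aA i * x i + x i) := by
    intro i _
    have hx0i := hx0 i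
    have hx1i := hx1 i
    by_cases hAi : i ∈ A
    · have ha : aA i = 1 := by simp [haAdef, hAi]
      have hr0 : r i = 0 := by simp [hrdef, hAi]
      by_cases hSi : i ∈ S
      · have hBi : i ∉ B' := by rw [hB'def]; simp [hSi]
        have hp1 : p i = 1 := by simp [hpdef, hAi, hSi]
        have hq0 : q i = 0 := by simp [hqdef, hBi]
        have he0 : e i = 0 := by simp [hedef, hSi]
        rw [ha, hp1, hq0, he0, hr0]
        ring_nf
        nlinarith [sq_nonneg (x i - 1/2)]
      · have hp0 : p i = 0 := by simp [hpdef, hSi]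
        by_cases hBi : i ∈ B'
        · have hq1 : q i = 1 := by simp [hqdef, hBi]
          have he0 : e i = 0 := by simp [hedef, hBi]
          rw [ha, hp0, hq1, he0, hr0]
          ring_nf
          nlinarith [hεdef, hε0, hεhalf, hx0i, hx1i, mul_nonneg hε0.le hx0i,
            sq_nonneg (1 - x i)]
        · have hq0 : q i = 0 := by simp [hqdef, hBi]
          have he1 : e i = 1 := by simp [hedef, hAi, hSi, hBi]
          rw [ha, hp0, hq0, he1, hr0]
          ring_nf
          nlinarith [hεdef, hε0, hεhalf, hx0i, hx1i, sq_nonneg (x i - 1/4),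
            mul_nonneg (by linarith : (0:ℝ) ≤ 1/2 - ε) (by linarith : (0:ℝ) ≤ 1 - x i)]
    · have ha : aA i = 0 := by simp [haAdef, hAi]
      have hp0 : p i = 0 := by simp [hpdef, hAi]
      have he0 : e i = 0 := by simp [hedef, hAi]
      by_cases hBi : i ∈ B'
      · have hq1 : q i = 1 := by simp [hqdef, hBi]
        have hr0 : r i = 0 := by simp [hrdef, hBi]
        rw [ha, hp0, hq1, he0, hr0]
        ring_nf
        nlinarith [hεdef, hε0, hεhalf, hx0i, hx1i, sq_nonneg (x i - 1/2),
          mul_nonneg hε0.le (by linarith : (0:ℝ) ≤ 1 - x i)]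
      · have hq0 : q i = 0 := by simp [hqdef, hBi]
        have hr1 : r i = 1 := by simp [hrdef, hAi, hBi]
        rw [ha, hp0, hq0, he0, hr1]
        ring_nf
        nlinarith [sq_nonneg (x i)]
  have hMC2 := le_trans (Finset.sum_le_sum hpt) hC
  -- scalar quantities
  set S1 : ℝ := ∑ i, p i * (1 - x i) with hS1def
  set w1 : ℝ := ∑ i, p i with hw1def
  set w2 : ℝ := ∑ i, q i with hw2def
  set Qv : ℝ := ∑ i, r i * x i with hQdef
  set Ex : ℝ := ∑ i, e i * x i with hExdef
  have hG : (1 - ε) * S1 - w1 / 4 - (1/4 + ε) * w2 - (1 + ε) * Qv - Ex ≤ 0 := by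
    have hexp : (1 - ε) * S1 - w1 / 4 - (1/4 + ε) * w2 - (1 + ε) * Qv - Ex
        = ∑ i, ((1 - ε) * (p i * (1 - x i)) - p i / 4 - (1/4 + ε) * q i
            - (1 + ε) * (r i * x i) - e i * x i) := by
      rw [hS1def, hw1def, hw2def, hQdef, hExdef, Finset.mul_sum, Finset.mul_sum,
        Finset.mul_sum, Finset.sum_div, ← Finset.sum_sub_distrib, ← Finset.sum_sub_distrib,
        ← Finset.sum_sub_distrib, ← Finset.sum_sub_distrib]
    rw [hexp]
    exact hMC2
  have hpnn : ∀ i, 0 ≤ p i := by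
    intro i; simp only [hpdef]; split <;> norm_num
  have hqnn : ∀ i, 0 ≤ q i := by
    intro i; simp only [hqdef]; split <;> norm_num
  have hS1nn : 0 ≤ S1 := by
    apply Finset.sum_nonneg; intro i _
    exact mul_nonneg (hpnn i) (by linarith [hx1 i])
  have hS1w1 : S1 ≤ w1 := by
    apply Finset.sum_le_sum; intro i _
    nlinarith [hpnn i, hx0 i, hx1 i]
  have hw1nn : 0 ≤ w1 := Finset.sum_nonneg fun i _ => hpnn i
  have hw2nn : 0 ≤ w2 := Finset.sum_nonneg fun i _ => hqnn i
  have hQnn : 0 ≤ Qv := by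
    apply Finset.sum_nonneg; intro i _
    apply mul_nonneg _ (hx0 i)
    simp only [hrdef]; split <;> norm_num
  have hExnn : 0 ≤ Ex := by
    apply Finset.sum_nonneg; intro i _
    apply mul_nonneg _ (hx0 i)
    simp only [hedef]; split <;> norm_num
  -- T = ∑ (1-q) x and its decomposition
  set T : ℝ := ∑ i, (1 - q i) * x i with hTdef
  have hT : T = (w1 - S1) + Ex + Qv := by
    have hdec : ∀ i ∈ (univ : Finset (Fin m)),
        (1 - q i) * x i = (p i - p i * (1 - x i)) + e i * x i + r i * x i := by
      intro i _
      by_cases hAi : i ∈ A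
      · have hr0 : r i = 0 := by simp [hrdef, hAi]
        by_cases hSi : i ∈ S
        · have hBi : i ∉ B' := by rw [hB'def]; simp [hSi]
          have hp1 : p i = 1 := by simp [hpdef, hAi, hSi]
          have hq0 : q i = 0 := by simp [hqdef, hBi]
          have he0 : e i = 0 := by simp [hedef, hSi]
          rw [hp1, hq0, he0, hr0]; ring
        · have hp0 : p i = 0 := by simp [hpdef, hSi]
          by_cases hBi : i ∈ B'
          · have hq1 : q i = 1 := by simp [hqdef, hBi]
            have he0 : e i = 0 := by simp [hedef, hBi]
            rw [hp0, hq1, he0, hr0]; ring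
          · have hq0 : q i = 0 := by simp [hqdef, hBi]
            have he1 : e i = 1 := by simp [hedef, hAi, hSi, hBi]
            rw [hp0, hq0, he1, hr0]; ring
      · have hp0 : p i = 0 := by simp [hpdef, hAi]
        have he0 : e i = 0 := by simp [hedef, hAi]
        by_cases hBi : i ∈ B'
        · have hq1 : q i = 1 := by simp [hqdef, hBi]
          have hr0 : r i = 0 := by simp [hrdef, hBi]
          rw [hp0, hq1, he0, hr0]; ring
        · have hq0 : q i = 0 := by simp [hqdef, hBi]
          have hr1 : r i = 1 := by simp [hrdef, hAi, hBi]
          rw [hp0, hq0, he0, hr1]; ring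
    rw [hTdef, Finset.sum_congr rfl hdec, Finset.sum_add_distrib, Finset.sum_add_distrib,
      Finset.sum_sub_distrib]
  -- the key scalar inequality
  have hscal : T + w2 - (3/4 - 2*ε) * (w1 + w2) ≥ 0 := by
    have hidentity : (1 + ε) * (T + w2 - (3/4 - 2*ε) * (w1 + w2))
        = 2*ε*(w1 - S1)
          + (w1/4 + (1/4 + ε)*w2 + (1 + ε)*Qv + Ex - (1 - ε)*S1)
          + (ε/4 + 2*ε^2)*w1 + (5*ε/4 + 2*ε^2)*w2 + ε*Ex := by
      rw [hT]; ring
    have hrhs : 0 ≤ (1 + ε) * (T + w2 - (3/4 - 2*ε) * (w1 + w2)) := by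
      rw [hidentity]
      have t1 : 0 ≤ 2*ε*(w1 - S1) := mul_nonneg (by linarith) (by linarith)
      have t2 : 0 ≤ w1/4 + (1/4 + ε)*w2 + (1 + ε)*Qv + Ex - (1 - ε)*S1 := by linarith
      have t3 : 0 ≤ (ε/4 + 2*ε^2)*w1 := mul_nonneg (by nlinarith) hw1nn
      have t4 : 0 ≤ (5*ε/4 + 2*ε^2)*w2 := mul_nonneg (by nlinarith) hw2nn
      have t5 : 0 ≤ ε*Ex := mul_nonneg hε0.le hExnn
      linarith
    nlinarith [hrhs, hε0]
  -- welfare lower bound per j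
  have hwel : ∀ j : Fin k, (b j ∩ B'ᶜ).card + B'.card ≤ swB (bval (b j)) (xval V2) := by
    intro j
    have h1 : bval (b j) (B'ᶜ) + xval V2 (B'ᶜ)ᶜ ≤ swB (bval (b j)) (xval V2) := by
      unfold swB
      exact Finset.le_sup (f := fun T => bval (b j) T + xval V2 Tᶜ) (mem_univ (B'ᶜ))
    rw [compl_compl] at h1
    refine le_trans ?_ h1
    apply Nat.add_le_add_left
    have h2 : bval B B' ≤ xval V2 B' := by
      unfold xval bval
      exact Finset.le_sup (f := fun C => (C ∩ B').card) hBV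
    have h3 : bval B B' = B'.card := by
      unfold bval
      rw [Finset.inter_eq_right.2]
      rw [hB'def]
      exact Finset.inter_subset_left
    rw [← h3]
    exact h2
  -- card of intersection as a sum
  have hcard : ∀ j : Fin k, ((b j ∩ B'ᶜ).card : ℝ) = ∑ i, (1 - q i) * βf j i := by
    intro j
    have h1 : ∑ i, (if i ∈ b j ∩ B'ᶜ then (1:ℝ) else 0) = ((b j ∩ B'ᶜ).card : ℝ) := by
      rw [Finset.sum_ite_mem, univ_inter, Finset.sum_const, nsmul_eq_mul, mul_one]
    rw [← h1]
    apply Finset.sum_congr rfl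
    intro i _
    simp only [hqdef, hβdef, Finset.mem_inter, Finset.mem_compl]
    by_cases h2 : i ∈ b j <;> by_cases h3 : i ∈ B' <;> simp [h2, h3]
  have hsumcard : (1/(k:ℝ)) * ∑ j, ((b j ∩ B'ᶜ).card : ℝ) = T := by
    rw [Finset.sum_congr rfl (fun j _ => hcard j), Finset.sum_comm]
    have hc2 : ∀ i ∈ (univ : Finset (Fin m)),
        ∑ j, (1 - q i) * βf j i = (k:ℝ) * ((1 - q i) * x i) := by
      intro i _
      rw [← Finset.mul_sum, hxk i]; ring
    rw [Finset.sum_congr rfl hc2, ← Finset.mul_sum]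
    rw [hTdef]
    field_simp
  -- card identities for w1 and w2
  have hw1card : ((A ∩ S).card : ℝ) = w1 := by
    rw [hw1def, hpdef]
    rw [Finset.sum_ite_mem, univ_inter, Finset.sum_const, nsmul_eq_mul, mul_one]
  have hw2card : ((B'.card : ℕ) : ℝ) = w2 := by
    rw [hw2def, hqdef]
    rw [Finset.sum_ite_mem, univ_inter, Finset.sum_const, nsmul_eq_mul, mul_one]
  -- combine: average welfare ≥ T + w2
  have hP : T + w2 ≤ (1/(k:ℝ)) * ∑ j, (swB (bval (b j)) (xval V2) : ℝ) := by
    have h2 : ∑ j, (((b j ∩ B'ᶜ).card : ℝ) + (B'.card : ℝ))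
        ≤ ∑ j, (swB (bval (b j)) (xval V2) : ℝ) := by
      apply Finset.sum_le_sum
      intro j _
      exact_mod_cast hwel j
    rw [Finset.sum_add_distrib, Finset.sum_const, card_univ, Fintype.card_fin,
      nsmul_eq_mul] at h2
    have h3 := mul_le_mul_of_nonneg_left h2 (by positivity : (0:ℝ) ≤ 1/(k:ℝ))
    have h4 : (1/(k:ℝ)) * ((∑ j, ((b j ∩ B'ᶜ).card : ℝ)) + (k:ℝ) * (B'.card : ℝ))
        = T + w2 := by
      rw [mul_add, hsumcard]
      rw [← hw2card]
      field_simp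
    rw [h4] at h3
    exact h3
  -- the optimum equals w1 + w2
  have hOPT : (swB (xval V1) (xval V2) : ℝ) = w1 + w2 := by
    have h1 : swB (xval V1) (xval V2) = xval V1 S + xval V2 Sᶜ := hS
    have h2 : xval V1 S = (A ∩ S).card := hA
    have h3 : xval V2 Sᶜ = (B ∩ Sᶜ).card := hB
    rw [h1, h2, h3]
    push_cast
    rw [hw1card, hw2card]
  -- finish
  have hek : (1:ℝ)/(k:ℝ) = 2*ε := by rw [hεdef]; field_simp
  rw [ge_iff_le, hOPT]
  calc (3/4 - 1/(k:ℝ)) * (w1 + w2) = (3/4 - 2*ε) * (w1 + w2) := by rw [hek]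
    _ ≤ T + w2 := by linarith [hscal]
    _ ≤ (1/(k:ℝ)) * ∑ j, (swB (bval (b j)) (xval V2) : ℝ) := hP
end

section
/- Let x_1,…,x_m be reals with 0 ≤ x_i ≤ 1 for all i, let A and A' be disjoint subsets of [m], let V ≥ 0 be real, and let k > 0. If ∑_{i=1}^m (x_i − x_i²) + ∑_{i∈A} x_i ≥ |A| − V/k, then |A'| + ∑_{i∉A'} x_i ≥ (3/4)·(|A| + |A'|) − V/k. -/
open Finset

/-- the core algebraic inequality behind the `(3/4 − 1/k)`-approximation of
the `(k,1/2)`-sketch protocol for two binary XOS bidders. -/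
theorem stmt7 {m : ℕ} (x : Fin m → ℝ) (hx0 : ∀ i, 0 ≤ x i) (hx1 : ∀ i, x i ≤ 1)
    (A A' : Finset (Fin m)) (hdisj : Disjoint A A')
    (V : ℝ) (hV : 0 ≤ V) (k : ℝ) (hk : 0 < k)
    (h : ∑ i, (x i - (x i) ^ 2) + ∑ i ∈ A, x i ≥ (A.card : ℝ) - V / k) :
    (A'.card : ℝ) + ∑ i ∈ A'ᶜ, x i
      ≥ (3 / 4 : ℝ) * ((A.card : ℝ) + (A'.card : ℝ)) - V / k := by
  have hsub : A ⊆ A'ᶜ := fun i hi =>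
    Finset.mem_compl.mpr (fun h' => Finset.disjoint_left.mp hdisj hi h')
  have hsq : ∀ i, x i - (x i) ^ 2 ≤ 1 / 4 := fun i => by
    nlinarith [sq_nonneg (x i - 1 / 2)]
  -- decomposition of the full sum
  have hdec1 : ∑ i ∈ A', (x i - (x i) ^ 2) + ∑ i ∈ A'ᶜ, (x i - (x i) ^ 2)
      = ∑ i, (x i - (x i) ^ 2) := Finset.sum_add_sum_compl A' _
  have hdec2 : ∑ i ∈ A'ᶜ \ A, (x i - (x i) ^ 2) + ∑ i ∈ A, (x i - (x i) ^ 2)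
      = ∑ i ∈ A'ᶜ, (x i - (x i) ^ 2) := Finset.sum_sdiff hsub
  have hdec3 : ∑ i ∈ A'ᶜ \ A, x i + ∑ i ∈ A, x i = ∑ i ∈ A'ᶜ, x i :=
    Finset.sum_sdiff hsub
  -- bounds
  have hb1 : ∑ i ∈ A', (x i - (x i) ^ 2) ≤ (A'.card : ℝ) * (1 / 4) := by
    calc ∑ i ∈ A', (x i - (x i) ^ 2) ≤ ∑ _i ∈ A', (1 / 4 : ℝ) :=
          Finset.sum_le_sum (fun i _ => hsq i)
      _ = (A'.card : ℝ) * (1 / 4) := by simp [Finset.sum_const, mul_comm]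
  have hb2 : ∑ i ∈ A, (x i - (x i) ^ 2) ≤ (A.card : ℝ) * (1 / 4) := by
    calc ∑ i ∈ A, (x i - (x i) ^ 2) ≤ ∑ _i ∈ A, (1 / 4 : ℝ) :=
          Finset.sum_le_sum (fun i _ => hsq i)
      _ = (A.card : ℝ) * (1 / 4) := by simp [Finset.sum_const, mul_comm]
  have hb3 : ∑ i ∈ A'ᶜ \ A, (x i - (x i) ^ 2) ≤ ∑ i ∈ A'ᶜ \ A, x i :=
    Finset.sum_le_sum (fun i _ => by nlinarith [sq_nonneg (x i)])
  have hVk : 0 ≤ V / k := div_nonneg hV hk.le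
  linarith
end

section
/- Let k ≥ 2 be an integer, let C be a real with 1/2 ≤ C ≤ 1, let x_1,…,x_m be reals with 0 ≤ x_i ≤ 1 for all i, and let A1 and A' be disjoint subsets of [m]. Assume (i) ∑_{i=1}^m (x_i − x_i²) + ∑_{i∈A1} x_i ≥ |A1| − (|A1| + ∑_{i=1}^m x_i)/(2k), and (ii) ∑_{i∉A'} x_i ≤ |A1|. Then ∑_{i=1}^m x_i + (C − 1/k)·(|A'| − ∑_{i∈A'} x_i) ≥ (1 − 1/(4C) − 1/k)·(|A1| + |A'|). -/
open Finset

private lemma aux1 (C t d y : ℝ) (hC1 : 1 / 2 ≤ C) (hC2 : C ≤ 1) (ht : 0 ≤ t)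
    (hy0 : 0 ≤ y) (hy1 : y ≤ 1) (hd : 4 * C * d = 1) :
    0 ≤ C * y ^ 2 + (1 - 2 * C + t - C * t / 2) * y + (C - 1 + d) := by
  have hC0 : (0:ℝ) < C := by linarith
  have key : 0 ≤ 4 * C * (C * y ^ 2 + (1 - 2 * C + t - C * t / 2) * y + (C - 1 + d)) := by
    rcases le_or_gt 0 (1 - 2 * C + t - C * t / 2) with hβ | hβ
    · nlinarith [mul_nonneg (mul_nonneg (by linarith : (0:ℝ) ≤ 4 * C) hβ) hy0,
        sq_nonneg (2 * C * y), sq_nonneg (2 * C - 1)]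
    · have hB : 0 ≤ 2 * C - 1 + (1 - 2 * C + t - C * t / 2) := by
        nlinarith [mul_nonneg ht (by linarith : (0:ℝ) ≤ 2 - C)]
      nlinarith [sq_nonneg (2 * C * y + (1 - 2 * C + t - C * t / 2)),
        mul_nonneg (by linarith : (0:ℝ) ≤ 2 * C - 1 - (1 - 2 * C + t - C * t / 2)) hB]
  by_contra hcon
  push_neg at hcon
  nlinarith [key]

private lemma aux2 (C t d y : ℝ) (hC1 : 1 / 2 ≤ C) (hC2 : C ≤ 1) (ht : 0 ≤ t)
    (hy0 : 0 ≤ y) (hy1 : y ≤ 1) (hd : 4 * C * d = 1) :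
    0 ≤ C * y ^ 2 + (1 - 2 * C + t / 2 - C * t / 2) * y + (C - 1 + d + t / 2 - C * t / 2) := by
  have hC0 : (0:ℝ) < C := by linarith
  have hCt : 0 ≤ C * t * (1 - C) := by
    apply mul_nonneg (mul_nonneg hC0.le ht); linarith
  have key : 0 ≤ 4 * C * (C * y ^ 2 + (1 - 2 * C + t / 2 - C * t / 2) * y
      + (C - 1 + d + t / 2 - C * t / 2)) := by
    rcases le_or_gt 0 (1 - 2 * C + t / 2 - C * t / 2) with hβ | hβ
    · nlinarith [mul_nonneg (mul_nonneg (by linarith : (0:ℝ) ≤ 4 * C) hβ) hy0,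
        sq_nonneg (2 * C * y), sq_nonneg (2 * C - 1)]
    · have hB : 0 ≤ 2 * C - 1 + (1 - 2 * C + t / 2 - C * t / 2) := by
        nlinarith [mul_nonneg ht (by linarith : (0:ℝ) ≤ 1 - C)]
      nlinarith [sq_nonneg (2 * C * y + (1 - 2 * C + t / 2 - C * t / 2)),
        mul_nonneg (by linarith : (0:ℝ) ≤ 2 * C - 1 - (1 - 2 * C + t / 2 - C * t / 2)) hB]
  by_contra hcon
  push_neg at hcon
  nlinarith [key]

private lemma aux3 (C t y : ℝ) (hC1 : 1 / 2 ≤ C) (hC2 : C ≤ 1) (ht : 0 ≤ t)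
    (hy0 : 0 ≤ y) (hy1 : y ≤ 1) :
    0 ≤ C * y ^ 2 + (1 - C + t / 2 - C * t / 2) * y := by
  have hC0 : (0:ℝ) < C := by linarith
  have hq : 0 ≤ 1 - C + t / 2 - C * t / 2 := by
    nlinarith [mul_nonneg (by linarith : (0:ℝ) ≤ 1 - C) ht]
  nlinarith [mul_nonneg hC0.le (sq_nonneg y), mul_nonneg hq hy0]

private lemma sum_quad {ι : Type*} (s : Finset ι) (x : ι → ℝ) (p q r : ℝ) :
    ∑ i ∈ s, (p * (x i) ^ 2 + q * x i + r)
      = p * ∑ i ∈ s, (x i) ^ 2 + q * ∑ i ∈ s, x i + r * (s.card : ℝ) := by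
  rw [Finset.sum_add_distrib, Finset.sum_add_distrib, ← Finset.mul_sum, ← Finset.mul_sum,
    Finset.sum_const, nsmul_eq_mul]
  ring

private lemma sum_quad2 {ι : Type*} (s : Finset ι) (x : ι → ℝ) (p q : ℝ) :
    ∑ i ∈ s, (p * (x i) ^ 2 + q * x i)
      = p * ∑ i ∈ s, (x i) ^ 2 + q * ∑ i ∈ s, x i := by
  rw [Finset.sum_add_distrib, ← Finset.mul_sum, ← Finset.mul_sum]

/-- the key inductive inequality behind the `(1/2 − 1/k)`-approximation of
the sequential sketch protocol for `n` binary XOS bidders. -/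
theorem stmt8 {m : ℕ} (k : ℕ) (hk : 2 ≤ k) (C : ℝ) (hC1 : 1 / 2 ≤ C) (hC2 : C ≤ 1)
    (x : Fin m → ℝ) (hx0 : ∀ i, 0 ≤ x i) (hx1 : ∀ i, x i ≤ 1)
    (A1 A' : Finset (Fin m)) (hdisj : Disjoint A1 A')
    (h1 : ∑ i, (x i - (x i) ^ 2) + ∑ i ∈ A1, x i
      ≥ (A1.card : ℝ) - ((A1.card : ℝ) + ∑ i, x i) / (2 * k))
    (h2 : ∑ i ∈ A'ᶜ, x i ≤ (A1.card : ℝ)) :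
    ∑ i, x i + (C - 1 / k) * ((A'.card : ℝ) - ∑ i ∈ A', x i)
      ≥ (1 - 1 / (4 * C) - 1 / k) * ((A1.card : ℝ) + (A'.card : ℝ)) := by
  have hk2 : (2:ℝ) ≤ (k:ℝ) := by exact_mod_cast hk
  have hk0 : (0:ℝ) < (k:ℝ) := by linarith
  have hC0 : (0:ℝ) < C := by linarith
  have hCne : C ≠ 0 := ne_of_gt hC0
  set t : ℝ := 1 / (k:ℝ) with ht_def
  set d : ℝ := 1 / (4 * C) with hd_def
  have ht0 : 0 ≤ t := by rw [ht_def]; positivity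
  have hd : 4 * C * d = 1 := by rw [hd_def]; field_simp
  -- splitting equalities
  have hsub : ∑ i, (x i - (x i) ^ 2) = ∑ i, x i - ∑ i, (x i) ^ 2 :=
    Finset.sum_sub_distrib _ _
  have hcomp : ∑ i ∈ A'ᶜ, x i = ∑ i, x i - ∑ i ∈ A', x i := by
    have h := Finset.sum_add_sum_compl A' x
    linarith
  have hPRx : ∑ i ∈ (A1 ∪ A')ᶜ, x i
      = ∑ i, x i - ∑ i ∈ A1, x i - ∑ i ∈ A', x i := by
    have h := Finset.sum_add_sum_compl (A1 ∪ A') x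
    have h' : ∑ i ∈ A1 ∪ A', x i = ∑ i ∈ A1, x i + ∑ i ∈ A', x i :=
      Finset.sum_union hdisj
    linarith
  have hPRx2 : ∑ i ∈ (A1 ∪ A')ᶜ, (x i) ^ 2
      = ∑ i, (x i) ^ 2 - ∑ i ∈ A1, (x i) ^ 2 - ∑ i ∈ A', (x i) ^ 2 := by
    have h := Finset.sum_add_sum_compl (A1 ∪ A') (fun i => (x i) ^ 2)
    have h' : ∑ i ∈ A1 ∪ A', (x i) ^ 2 = ∑ i ∈ A1, (x i) ^ 2 + ∑ i ∈ A', (x i) ^ 2 :=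
      Finset.sum_union hdisj
    linarith
  have heq : ((A1.card : ℝ) + ∑ i, x i) / (2 * (k:ℝ))
      = ((A1.card : ℝ) + ∑ i, x i) * t / 2 := by
    rw [ht_def]; ring
  -- multiplied hypotheses
  have h1lin : 0 ≤ (∑ i, x i) - (∑ i, (x i) ^ 2) + ∑ i ∈ A1, x i
      + ((A1.card : ℝ) + ∑ i, x i) * t / 2 - (A1.card : ℝ) := by
    linarith [h1, hsub, heq]
  have hH1 : 0 ≤ C * ((∑ i, x i) - (∑ i, (x i) ^ 2) + ∑ i ∈ A1, x i
      + ((A1.card : ℝ) + ∑ i, x i) * t / 2 - (A1.card : ℝ)) :=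
    mul_nonneg hC0.le h1lin
  have h2lin : 0 ≤ (A1.card : ℝ) - ((∑ i, x i) - ∑ i ∈ A', x i) := by
    linarith [h2, hcomp]
  have hH2 : 0 ≤ t / 2 * ((A1.card : ℝ) - ((∑ i, x i) - ∑ i ∈ A', x i)) :=
    mul_nonneg (by linarith) h2lin
  -- summed pointwise inequalities
  have J1 : 0 ≤ C * (∑ i ∈ A', (x i) ^ 2) + (1 - 2 * C + t - C * t / 2) * (∑ i ∈ A', x i)
      + (C - 1 + d) * (A'.card : ℝ) := by
    rw [← sum_quad]
    exact Finset.sum_nonneg fun i _ => aux1 C t d (x i) hC1 hC2 ht0 (hx0 i) (hx1 i) hd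
  have J2 : 0 ≤ C * (∑ i ∈ A1, (x i) ^ 2) + (1 - 2 * C + t / 2 - C * t / 2) * (∑ i ∈ A1, x i)
      + (C - 1 + d + t / 2 - C * t / 2) * (A1.card : ℝ) := by
    rw [← sum_quad]
    exact Finset.sum_nonneg fun i _ => aux2 C t d (x i) hC1 hC2 ht0 (hx0 i) (hx1 i) hd
  have J3 : 0 ≤ C * (∑ i, (x i) ^ 2 - ∑ i ∈ A1, (x i) ^ 2 - ∑ i ∈ A', (x i) ^ 2)
      + (1 - C + t / 2 - C * t / 2) * (∑ i, x i - ∑ i ∈ A1, x i - ∑ i ∈ A', x i) := by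
    rw [← hPRx, ← hPRx2, ← sum_quad2]
    exact Finset.sum_nonneg fun i _ => aux3 C t (x i) hC1 hC2 ht0 (hx0 i) (hx1 i)
  linarith [hH1, hH2, J1, J2, J3]
end

section
/- Let v1 and v2 be XOS valuations on [m], let k be a positive integer, let (b¹_1,…,b¹_k) be a (k,1/3)-sketch of v1 and (b²_1,…,b²_k) a (k,1/3)-sketch of v2. Then (1/k²) ∑_{j=1}^k ∑_{j'=1}^k SW*(b¹_j, b²_{j'}) ≥ (23/32 − 1/k) · SW*(v1, v2); in particular max_{j,j' ∈ [k]} SW*(b¹_j, b²_{j'}) ≥ (23/32 − 1/k) · SW*(v1, v2), so the deterministic simultaneous protocol that allocates according to the best pair of reported sketch clauses is a (23/32 − 1/k)-approximation to the 2-party XOS allocation problem (and the corresponding thresholding rule solves the 2-party XOS decision problem with the same ratio). -/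
open Finset MeasureTheory

/-! ### Auxiliary machinery -/

noncomputable def indf (c : ℝ) : ℝ → ℝ := fun u => if u ≤ c then 1 else 0

def Nice (f : ℝ → ℝ) : Prop :=
  Measurable f ∧ IntegrableOn f (Set.Ioi 0) ∧ ∃ C, ∀ u, |f u| ≤ C

lemma indf_eqOn (c : ℝ) : ∀ u ∈ Set.Ioi (0:ℝ), indf c u = (Set.Ioc (0:ℝ) c).indicator 1 u := by
  intro u hu
  simp only [Set.mem_Ioi] at hu
  by_cases h : u ≤ c <;> simp [indf, Set.indicator, h, hu]

lemma nice_indf (c : ℝ) : Nice (indf c) := by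
  refine ⟨?_, ?_, 1, fun u => ?_⟩
  · have : indf c = (Set.Iic c).indicator 1 := by
      funext u; by_cases h : u ≤ c <;> simp [indf, Set.indicator, h]
    rw [this]; exact measurable_one.indicator measurableSet_Iic
  · have h1 : Integrable ((Set.Ioc (0:ℝ) c).indicator (1 : ℝ → ℝ)) := by
      rw [integrable_indicator_iff measurableSet_Ioc]
      exact integrableOn_const measure_Ioc_lt_top.ne
    exact (h1.integrableOn).congr_fun (fun u hu => (indf_eqOn c u hu).symm) measurableSet_Ioi
  · by_cases h : u ≤ c <;> simp [indf, h]

lemma nice_zero : Nice (fun _ => (0:ℝ)) :=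
  ⟨measurable_const, by simp [IntegrableOn], 0, by simp⟩

lemma Nice.add {f g : ℝ → ℝ} (hf : Nice f) (hg : Nice g) : Nice (fun u => f u + g u) := by
  obtain ⟨mf, if_, Cf, bf⟩ := hf; obtain ⟨mg, ig, Cg, bg⟩ := hg
  exact ⟨mf.add mg, if_.add ig, Cf + Cg, fun u => (abs_add_le _ _).trans (add_le_add (bf u) (bg u))⟩

lemma Nice.neg {f : ℝ → ℝ} (hf : Nice f) : Nice (fun u => -f u) := by
  obtain ⟨mf, if_, Cf, bf⟩ := hf
  exact ⟨mf.neg, if_.neg, Cf, fun u => by simpa using bf u⟩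

lemma Nice.sub {f g : ℝ → ℝ} (hf : Nice f) (hg : Nice g) : Nice (fun u => f u - g u) := by
  simpa [sub_eq_add_neg] using hf.add hg.neg

lemma Nice.const_mul {f : ℝ → ℝ} (hf : Nice f) (c : ℝ) : Nice (fun u => c * f u) := by
  obtain ⟨mf, if_, Cf, bf⟩ := hf
  exact ⟨mf.const_mul c, if_.const_mul c, |c| * Cf, fun u => by
    rw [abs_mul]; exact mul_le_mul_of_nonneg_left (bf u) (abs_nonneg c)⟩

lemma Nice.mul {f g : ℝ → ℝ} (hf : Nice f) (hg : Nice g) : Nice (fun u => f u * g u) := by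
  obtain ⟨mf, if_, Cf, bf⟩ := hf; obtain ⟨mg, ig, Cg, bg⟩ := hg
  refine ⟨mf.mul mg, ig.bdd_mul mf.aestronglyMeasurable (Filter.Eventually.of_forall fun u => by simpa [Real.norm_eq_abs] using bf u), ?_⟩
  exact ⟨Cf * Cg, fun u => by rw [abs_mul]; exact mul_le_mul (bf u) (bg u) (abs_nonneg _) ((abs_nonneg _).trans (bf 0))⟩

lemma Nice.finsum {ι : Type*} (s : Finset ι) (f : ι → ℝ → ℝ) (hf : ∀ j ∈ s, Nice (f j)) :
    Nice (fun u => ∑ j ∈ s, f j u) := by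
  classical
  induction s using Finset.induction_on with
  | empty => simpa using nice_zero
  | @insert a s ha ih =>
    have := (hf a (mem_insert_self a s)).add (ih (fun j hj => hf j (mem_insert_of_mem hj)))
    simpa [Finset.sum_insert ha] using this

lemma Nice.congr {f g : ℝ → ℝ} (hf : Nice f) (h : ∀ u, f u = g u) : Nice g := by
  have : f = g := funext h
  rwa [this] at hf

lemma integral_indf {c : ℝ} (h : 0 ≤ c) : ∫ u in Set.Ioi (0:ℝ), indf c u = c := by
  rw [setIntegral_congr_fun measurableSet_Ioi (g := (Set.Ioc (0:ℝ) c).indicator 1)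
    (fun u hu => indf_eqOn c u hu)]
  rw [integral_indicator measurableSet_Ioc]; simp [h]

lemma rX_eq {m k : ℕ} (b : Fin k → Fin m → ℝ) (i : Fin m) (u : ℝ) :
    rX b i u = (∑ j, indf (b j i) u) / k := rfl

lemma nice_rX {m k : ℕ} (b : Fin k → Fin m → ℝ) (i : Fin m) : Nice (rX b i) :=
  ((Nice.finsum univ (fun j => indf (b j i)) (fun j _ => nice_indf _)).const_mul
    ((k:ℝ)⁻¹)).congr (fun u => by rw [rX_eq]; ring)

lemma rX_nonneg {m k : ℕ} (b : Fin k → Fin m → ℝ) (i : Fin m) (u : ℝ) : 0 ≤ rX b i u := by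
  apply div_nonneg _ (Nat.cast_nonneg k)
  exact Finset.sum_nonneg fun j _ => by positivity

lemma rX_le_one {m k : ℕ} (hk : 0 < k) (b : Fin k → Fin m → ℝ) (i : Fin m) (u : ℝ) :
    rX b i u ≤ 1 := by
  rw [rX, div_le_one (by exact_mod_cast hk)]
  calc (∑ j, if u ≤ b j i then (1:ℝ) else 0) ≤ ∑ j : Fin k, 1 :=
        Finset.sum_le_sum fun j _ => by split <;> norm_num
    _ = k := by simp

lemma integral_rX {m k : ℕ} (b : Fin k → Fin m → ℝ) (i : Fin m) (hb : ∀ j, 0 ≤ b j i) :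
    ∫ u in Set.Ioi (0:ℝ), rX b i u = (∑ j, b j i) / k := by
  have : ∀ u, rX b i u = (k:ℝ)⁻¹ * ∑ j, indf (b j i) u := fun u => by rw [rX_eq]; ring
  rw [setIntegral_congr_fun measurableSet_Ioi (fun u _ => this u), integral_const_mul,
    integral_finset_sum _ (fun j _ => (nice_indf (b j i)).2.1)]
  rw [Finset.sum_congr rfl (fun j _ => integral_indf (hb j))]
  ring

lemma indf_max (a b u : ℝ) : indf (max a b) u = indf a u + indf b u - indf a u * indf b u := by
  by_cases h1 : u ≤ a <;> by_cases h2 : u ≤ b <;>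
    simp [indf, le_max_iff, h1, h2]

lemma per_item_welfare {m k : ℕ} (hk : 0 < k) (b1 b2 : Fin k → Fin m → ℝ)
    (i : Fin m) (h1 : ∀ j, 0 ≤ b1 j i) (h2 : ∀ j, 0 ≤ b2 j i) :
    ∫ u in Set.Ioi (0:ℝ), (rX b1 i u + rX b2 i u - rX b1 i u * rX b2 i u)
      = (1/(k:ℝ)^2) * ∑ j, ∑ j', max (b1 j i) (b2 j' i) := by
  have hk' : (k:ℝ) ≠ 0 := by positivity
  have key : ∀ u, rX b1 i u + rX b2 i u - rX b1 i u * rX b2 i u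
      = (1/(k:ℝ)^2) * ∑ j, ∑ j', indf (max (b1 j i) (b2 j' i)) u := by
    intro u
    have : ∑ j, ∑ j', indf (max (b1 j i) (b2 j' i)) u
        = ∑ j, ∑ j', (indf (b1 j i) u + indf (b2 j' i) u - indf (b1 j i) u * indf (b2 j' i) u) :=
      Finset.sum_congr rfl fun j _ => Finset.sum_congr rfl fun j' _ => indf_max _ _ _
    rw [this]
    have expand : ∑ j, ∑ j', (indf (b1 j i) u + indf (b2 j' i) u - indf (b1 j i) u * indf (b2 j' i) u)
        = (k:ℝ) * (∑ j, indf (b1 j i) u) + (k:ℝ) * (∑ j', indf (b2 j' i) u)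
          - (∑ j, indf (b1 j i) u) * (∑ j', indf (b2 j' i) u) := by
      simp only [Finset.sum_add_distrib, Finset.sum_sub_distrib, Finset.sum_const,
        card_univ, Fintype.card_fin, ← Finset.mul_sum, ← Finset.sum_mul, nsmul_eq_mul]
      try ring
    rw [expand, rX_eq, rX_eq]
    field_simp
  rw [setIntegral_congr_fun measurableSet_Ioi (fun u _ => key u), integral_const_mul,
    integral_finset_sum _ (fun j _ => (Nice.finsum univ _ (fun j' _ => nice_indf (max (b1 j i) (b2 j' i)))).2.1)]
  rw [Finset.sum_congr rfl (fun j _ => integral_finset_sum _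
    (fun j' _ => (nice_indf (max (b1 j i) (b2 j' i))).2.1))]
  rw [Finset.sum_congr rfl (fun j _ => Finset.sum_congr rfl
    (fun j' _ => integral_indf ((h1 j).trans (le_max_left _ _))))]

lemma swR_additive {m : ℕ} (a b : Fin m → ℝ) :
    swR (aval a) (aval b) = ∑ i, max (a i) (b i) := by
  apply le_antisymm
  · apply Finset.sup'_le
    intro S _
    have h1 : aval a S ≤ ∑ i ∈ S, max (a i) (b i) :=
      Finset.sum_le_sum fun i _ => le_max_left _ _
    have h2 : aval b Sᶜ ≤ ∑ i ∈ Sᶜ, max (a i) (b i) :=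
      Finset.sum_le_sum fun i _ => le_max_right _ _
    calc aval a S + aval b Sᶜ ≤ ∑ i ∈ S, max (a i) (b i) + ∑ i ∈ Sᶜ, max (a i) (b i) :=
          add_le_add h1 h2
      _ = ∑ i, max (a i) (b i) := Finset.sum_add_sum_compl S _
  · have := Finset.le_sup' (f := fun S : Finset (Fin m) => aval a S + aval b Sᶜ)
      (Finset.mem_univ (Finset.univ.filter (fun i => b i ≤ a i)))
    refine le_trans (le_of_eq ?_) this
    set S := Finset.univ.filter (fun i => b i ≤ a i) with hS
    have e1 : aval a S = ∑ i ∈ S, max (a i) (b i) := by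
      apply Finset.sum_congr rfl
      intro i hi
      rw [hS, Finset.mem_filter] at hi
      rw [max_eq_left hi.2]
    have e2 : aval b Sᶜ = ∑ i ∈ Sᶜ, max (a i) (b i) := by
      apply Finset.sum_congr rfl
      intro i hi
      rw [Finset.mem_compl, hS, Finset.mem_filter] at hi
      push_neg at hi
      rw [max_eq_right (le_of_lt (hi (Finset.mem_univ i)))]
    rw [e1, e2, Finset.sum_add_sum_compl]

lemma aval_univ_le_swR {m t1 t2 : ℕ} (C1 : Fin (t1 + 1) → Fin m → ℝ)
    (C2 : Fin (t2 + 1) → Fin m → ℝ) (j : Fin (t1 + 1)) :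
    aval (C1 j) Finset.univ ≤ swR (xosVal C1) (xosVal C2) := by
  have h1 : aval (C1 j) Finset.univ ≤ xosVal C1 Finset.univ := by
    unfold xosVal; exact Finset.le_sup' (fun j' => aval (C1 j') Finset.univ) (Finset.mem_univ j)
  have h2 : xosVal C2 (Finset.univ : Finset (Fin m))ᶜ = 0 := by
    rw [Finset.compl_univ]
    have : ∀ j' : Fin (t2+1), aval (C2 j') (∅ : Finset (Fin m)) = 0 := fun j' => by
      simp [aval]
    simp only [xosVal, this]
    exact Finset.sup'_const Finset.univ_nonempty (0:ℝ)
  have := Finset.le_sup' (f := fun S : Finset (Fin m) => xosVal C1 S + xosVal C2 Sᶜ)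
    (Finset.mem_univ (Finset.univ : Finset (Fin m)))
  rw [h2] at this
  simpa only [swR] using le_trans (show aval (C1 j) univ ≤ xosVal C1 univ + 0 by linarith) this

lemma aval_univ_le_swR' {m t1 t2 : ℕ} (C1 : Fin (t1 + 1) → Fin m → ℝ)
    (C2 : Fin (t2 + 1) → Fin m → ℝ) (j : Fin (t2 + 1)) :
    aval (C2 j) Finset.univ ≤ swR (xosVal C1) (xosVal C2) := by
  have h1 : aval (C2 j) Finset.univ ≤ xosVal C2 Finset.univ := by
    unfold xosVal; exact Finset.le_sup' (fun j' => aval (C2 j') Finset.univ) (Finset.mem_univ j)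
  have h2 : xosVal C1 (∅ : Finset (Fin m)) = 0 := by
    have : ∀ j' : Fin (t1+1), aval (C1 j') (∅ : Finset (Fin m)) = 0 := fun j' => by
      simp [aval]
    simp only [xosVal, this]
    exact Finset.sup'_const Finset.univ_nonempty (0:ℝ)
  have h3 := Finset.le_sup' (f := fun S : Finset (Fin m) => xosVal C1 S + xosVal C2 Sᶜ)
    (Finset.mem_univ (∅ : Finset (Fin m)))
  rw [h2] at h3
  simp only [Finset.compl_empty] at h3
  simpa only [swR] using le_trans (show aval (C2 j) univ ≤ 0 + xosVal C2 univ by linarith) h3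

lemma nice_fobj {m k : ℕ} (b : Fin k → Fin m → ℝ) (i : Fin m) :
    Nice (fun u => rX b i u - (1/3 : ℝ) * (rX b i u) ^ 2) :=
  ((nice_rX b i).sub (((nice_rX b i).mul (nice_rX b i)).const_mul (1/3))).congr
    (fun u => by ring)

lemma nice_g1 {m k : ℕ} (b : Fin k → Fin m → ℝ) (i : Fin m) (c : ℝ) :
    Nice (fun u => (indf c u - rX b i u) * (1 - (2/3 : ℝ) * rX b i u)) :=
  (((nice_indf c).sub (nice_rX b i)).sub
    ((((nice_indf c).sub (nice_rX b i)).mul (nice_rX b i)).const_mul (2/3))).congr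
    (fun u => by ring)

lemma nice_g2 {m k : ℕ} (b : Fin k → Fin m → ℝ) (i : Fin m) (c : ℝ) :
    Nice (fun u => indf c u + rX b i u - 2 * indf c u * rX b i u) :=
  (((nice_indf c).add (nice_rX b i)).sub
    (((nice_indf c).mul (nice_rX b i)).const_mul 2)).congr (fun u => by ring)

lemma rX_update {m t k : ℕ} (C : Fin (t+1) → Fin m → ℝ) (σ : Fin k → Fin (t+1))
    (j0 : Fin k) (js : Fin (t+1)) (i : Fin m) (u : ℝ) :
    rX (fun j => C (Function.update σ j0 js j)) i u
      = rX (fun j => C (σ j)) i u + (indf (C js i) u - indf (C (σ j0) i) u) / k := by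
  unfold rX indf
  rw [← add_div]
  congr 1
  have : ∀ j : Fin k, (if u ≤ C (Function.update σ j0 js j) i then (1:ℝ) else 0)
      = (if u ≤ C (σ j) i then (1:ℝ) else 0)
        + (if j = j0 then ((if u ≤ C js i then (1:ℝ) else 0) - (if u ≤ C (σ j0) i then (1:ℝ) else 0)) else 0) := by
    intro j
    by_cases h : j = j0
    · subst h; simp [Function.update_self]
    · simp [Function.update_of_ne h, h]
  rw [Finset.sum_congr rfl fun j _ => this j, Finset.sum_add_distrib,
    Finset.sum_ite_eq' Finset.univ j0]
  simp

lemma ite01 (P : Prop) [Decidable P] : (if P then (1:ℝ) else 0) = 0 ∨ (if P then (1:ℝ) else 0) = 1 := by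
  split <;> simp

lemma swap_sum_algebra {k : ℕ} (hk : 0 < k) (o x : ℝ) (ho : o = 0 ∨ o = 1)
    (e : Fin k → ℝ) (he : ∀ j, e j = 0 ∨ e j = 1) (hx : (∑ j, e j) = k * x) :
    ∑ j0, ((x + (o - e j0)/k) - (1/3:ℝ)*((x + (o - e j0)/k))^2)
      = k * (x - (1/3)*x^2)
        + ((o - x)*(1 - (2/3)*x) - (o + x - 2*o*x)/(3*k)) := by
  have hk' : (k:ℝ) ≠ 0 := by positivity
  have hterm : ∀ j0, ((x + (o - e j0)/k) - (1/3:ℝ)*((x + (o - e j0)/k))^2)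
      = (x + o/k - x^2/3 - 2*x*o/(3*k) - o^2/(3*k^2))
        + (-1/k + 2*x/(3*k) + (2*o-1)/(3*k^2)) * e j0 := by
    intro j0
    rcases he j0 with h | h <;> rw [h] <;> field_simp <;> ring
  rw [Finset.sum_congr rfl fun j0 _ => hterm j0, Finset.sum_add_distrib, Finset.sum_const,
    ← Finset.mul_sum, hx]
  simp only [Finset.card_univ, Fintype.card_fin, nsmul_eq_mul]
  rcases ho with h | h <;> rw [h] <;> field_simp <;> ring

lemma sketch_ineq {m t k : ℕ} (hk : 0 < k) (C : Fin (t+1) → Fin m → ℝ)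
    (σ : Fin k → Fin (t+1)) (hσ : IsSketchR (1/3 : ℝ) C σ) (js : Fin (t+1)) :
    ∑ i, ∫ u in Set.Ioi (0:ℝ), ((indf (C js i) u - rX (fun j => C (σ j)) i u)
        * (1 - (2/3 : ℝ) * rX (fun j => C (σ j)) i u))
      ≤ (1/(3*(k:ℝ))) * ∑ i, ∫ u in Set.Ioi (0:ℝ), (indf (C js i) u + rX (fun j => C (σ j)) i u
        - 2 * indf (C js i) u * rX (fun j => C (σ j)) i u) := by
  have hk' : (k:ℝ) ≠ 0 := by positivity
  set b := fun j => C (σ j) with hb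
  have per_i : ∀ i : Fin m,
      ∑ j0 : Fin k, (∫ u in Set.Ioi (0:ℝ), (rX (fun j => C (Function.update σ j0 js j)) i u
          - (1/3 : ℝ) * (rX (fun j => C (Function.update σ j0 js j)) i u) ^ 2))
      = (k:ℝ) * (∫ u in Set.Ioi (0:ℝ), (rX b i u - (1/3 : ℝ) * (rX b i u) ^ 2))
        + ((∫ u in Set.Ioi (0:ℝ), ((indf (C js i) u - rX b i u) * (1 - (2/3 : ℝ) * rX b i u)))
          - (1/(3*(k:ℝ))) * ∫ u in Set.Ioi (0:ℝ), (indf (C js i) u + rX b i u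
            - 2 * indf (C js i) u * rX b i u)) := by
    intro i
    rw [← integral_finset_sum _ (fun j0 _ => (nice_fobj (fun j => C (Function.update σ j0 js j)) i).2.1)]
    have ptwise : ∀ u ∈ Set.Ioi (0:ℝ),
        (∑ j0 : Fin k, (rX (fun j => C (Function.update σ j0 js j)) i u
          - (1/3 : ℝ) * (rX (fun j => C (Function.update σ j0 js j)) i u) ^ 2))
        = (k:ℝ) * (rX b i u - (1/3 : ℝ) * (rX b i u) ^ 2)
          + (((indf (C js i) u - rX b i u) * (1 - (2/3 : ℝ) * rX b i u))
            - (1/(3*(k:ℝ))) * (indf (C js i) u + rX b i u - 2 * indf (C js i) u * rX b i u)) := by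
      intro u _
      have hupd : ∀ j0 : Fin k, rX (fun j => C (Function.update σ j0 js j)) i u
          = rX b i u + (indf (C js i) u - indf (C (σ j0) i) u) / k := fun j0 => rX_update C σ j0 js i u
      rw [Finset.sum_congr rfl fun j0 _ => by rw [hupd j0]]
      have halg := swap_sum_algebra hk (indf (C js i) u) (rX b i u)
        (ite01 _) (fun j => indf (C (σ j) i) u) (fun j => ite01 _)
        (by rw [hb]; unfold rX indf; field_simp)
      calc ∑ j0 : Fin k, (rX b i u + (indf (C js i) u - indf (C (σ j0) i) u) / k
            - (1/3 : ℝ) * (rX b i u + (indf (C js i) u - indf (C (σ j0) i) u) / k) ^ 2)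
          = ∑ j0 : Fin k, ((rX b i u + (indf (C js i) u - indf (C (σ j0) i) u) / k)
            - (1/3 : ℝ) * ((rX b i u + (indf (C js i) u - indf (C (σ j0) i) u) / k)) ^ 2) := rfl
        _ = _ := by rw [halg]; ring
    rw [setIntegral_congr_fun measurableSet_Ioi ptwise]
    have i1 := (nice_fobj b i).2.1
    have i2 := (nice_g1 b i (C js i)).2.1
    have i3 := (nice_g2 b i (C js i)).2.1
    have i1' : IntegrableOn (fun u => (k:ℝ) * (rX b i u - (1/3 : ℝ) * (rX b i u) ^ 2)) (Set.Ioi 0) := i1.const_mul _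
    have i3' : IntegrableOn (fun u => (1/(3*(k:ℝ))) * (indf (C js i) u + rX b i u
        - 2 * indf (C js i) u * rX b i u)) (Set.Ioi 0) := i3.const_mul _
    have i4 : IntegrableOn (fun u => ((indf (C js i) u - rX b i u) * (1 - (2/3 : ℝ) * rX b i u))
        - (1/(3*(k:ℝ))) * (indf (C js i) u + rX b i u - 2 * indf (C js i) u * rX b i u)) (Set.Ioi 0) := i2.sub i3'
    rw [integral_add i1' i4, integral_sub i2 i3', integral_const_mul, integral_const_mul]
  have hsum : ∑ j0 : Fin k, rObj (1/3 : ℝ) (fun j => C (Function.update σ j0 js j))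
      ≤ (k:ℝ) * rObj (1/3 : ℝ) b := by
    calc ∑ j0 : Fin k, rObj (1/3 : ℝ) (fun j => C (Function.update σ j0 js j))
        ≤ ∑ j0 : Fin k, rObj (1/3 : ℝ) (fun j => C (σ j)) :=
          Finset.sum_le_sum fun j0 _ => hσ (Function.update σ j0 js)
      _ = (k:ℝ) * rObj (1/3 : ℝ) b := by
          rw [Finset.sum_const, Finset.card_univ, Fintype.card_fin, nsmul_eq_mul, hb]
  have expand : ∑ j0 : Fin k, rObj (1/3 : ℝ) (fun j => C (Function.update σ j0 js j))
      = (k:ℝ) * rObj (1/3 : ℝ) b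
        + ((∑ i, ∫ u in Set.Ioi (0:ℝ), ((indf (C js i) u - rX b i u) * (1 - (2/3 : ℝ) * rX b i u)))
          - (1/(3*(k:ℝ))) * ∑ i, ∫ u in Set.Ioi (0:ℝ), (indf (C js i) u + rX b i u
            - 2 * indf (C js i) u * rX b i u)) := by
    unfold rObj
    rw [Finset.sum_comm]
    rw [Finset.sum_congr rfl fun i _ => per_i i]
    rw [Finset.sum_add_distrib, Finset.sum_sub_distrib, ← Finset.mul_sum, ← Finset.mul_sum]
  rw [expand] at hsum
  linarith

lemma master (x y o1 o2 q : ℝ) (hx0 : 0 ≤ x) (hx1 : x ≤ 1) (hy0 : 0 ≤ y) (hy1 : y ≤ 1)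
    (ho1 : o1 = 0 ∨ o1 = 1) (ho2 : o2 = 0 ∨ o2 = 1) (hq : q = 0 ∨ q = 1) :
    (23/32 : ℝ) * (q * o1 + (1 - q) * o2)
      ≤ (x + y - x * y) + (3/4) * ((o1 - x) * (1 - (2/3) * x))
        + (3/4) * ((o2 - y) * (1 - (2/3) * y)) := by
  rcases ho1 with h1 | h1 <;> rcases ho2 with h2 | h2 <;> rcases hq with h3 | h3 <;>
    subst h1 <;> subst h2 <;> subst h3 <;>
    nlinarith [sq_nonneg (x - y - 1/4), sq_nonneg (x - y + 1/4), sq_nonneg (x - y),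
      mul_nonneg hx0 hy0, mul_nonneg (sub_nonneg.2 hx1) (sub_nonneg.2 hy1),
      mul_nonneg hx0 (sub_nonneg.2 hy1), mul_nonneg hy0 (sub_nonneg.2 hx1)]

lemma indf_nonneg (c u : ℝ) : 0 ≤ indf c u := by unfold indf; split <;> norm_num

/-- if `(b¹_1,…,b¹_k)` and `(b²_1,…,b²_k)` are `(k,1/3)`-sketches of the XOS
valuations `v1` and `v2`, then the average of `SW*(b¹_j, b²_{j'})` over all pairs is at
least `(23/32 − 1/k) · SW*(v1, v2)`; in particular some pair of reported sketch clauses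
achieves welfare at least `(23/32 − 1/k) · SW*(v1, v2)`. -/
theorem stmt9 {m t1 t2 k : ℕ} (hk : 0 < k)
    (C1 : Fin (t1 + 1) → Fin m → ℝ) (C2 : Fin (t2 + 1) → Fin m → ℝ)
    (hC1 : ∀ j i, 0 ≤ C1 j i) (hC2 : ∀ j i, 0 ≤ C2 j i)
    (σ1 : Fin k → Fin (t1 + 1)) (σ2 : Fin k → Fin (t2 + 1))
    (hσ1 : IsSketchR (1 / 3 : ℝ) C1 σ1) (hσ2 : IsSketchR (1 / 3 : ℝ) C2 σ2) :
    (1 / (k : ℝ) ^ 2) * ∑ j, ∑ j', swR (aval (C1 (σ1 j))) (aval (C2 (σ2 j')))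
        ≥ (23 / 32 - 1 / k : ℝ) * swR (xosVal C1) (xosVal C2)
    ∧ ∃ j j', swR (aval (C1 (σ1 j))) (aval (C2 (σ2 j')))
        ≥ (23 / 32 - 1 / k : ℝ) * swR (xosVal C1) (xosVal C2) := by
  classical
  have hkR : (0:ℝ) < k := by exact_mod_cast hk
  have hk' : (k:ℝ) ≠ 0 := ne_of_gt hkR
  obtain ⟨S, -, hS⟩ := Finset.exists_mem_eq_sup'
    (Finset.univ_nonempty (α := Finset (Fin m)))
    (fun S : Finset (Fin m) => xosVal C1 S + xosVal C2 Sᶜ)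
  obtain ⟨j1s, -, hj1⟩ := Finset.exists_mem_eq_sup'
    (Finset.univ_nonempty (α := Fin (t1+1))) (fun j : Fin (t1+1) => aval (C1 j) S)
  obtain ⟨j2s, -, hj2⟩ := Finset.exists_mem_eq_sup'
    (Finset.univ_nonempty (α := Fin (t2+1))) (fun j : Fin (t2+1) => aval (C2 j) Sᶜ)
  have hSW : swR (xosVal C1) (xosVal C2) = ∑ i ∈ S, C1 j1s i + ∑ i ∈ Sᶜ, C2 j2s i := by
    have h0 : swR (xosVal C1) (xosVal C2) = xosVal C1 S + xosVal C2 Sᶜ := hS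
    have h1 : xosVal C1 S = ∑ i ∈ S, C1 j1s i := by
      have := hj1; unfold xosVal aval at *; exact this
    have h2 : xosVal C2 Sᶜ = ∑ i ∈ Sᶜ, C2 j2s i := by
      have := hj2; unfold xosVal aval at *; exact this
    rw [h0, h1, h2]
  set SW := swR (xosVal C1) (xosVal C2) with hSWdef
  -- abbreviations (as plain functions, not `set`, to keep syntactic match)
  -- Step 1 : average welfare = sum of integrals
  have h_avg : (1 / (k : ℝ) ^ 2) * ∑ j, ∑ j', swR (aval (C1 (σ1 j))) (aval (C2 (σ2 j')))
      = ∑ i, ∫ u in Set.Ioi (0:ℝ), (rX (fun j => C1 (σ1 j)) i u + rX (fun j => C2 (σ2 j)) i u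
          - rX (fun j => C1 (σ1 j)) i u * rX (fun j => C2 (σ2 j)) i u) := by
    rw [Finset.sum_congr rfl fun j _ => Finset.sum_congr rfl fun j' _ =>
      swR_additive (C1 (σ1 j)) (C2 (σ2 j'))]
    rw [Finset.sum_congr rfl fun j (_ : j ∈ univ) => Finset.sum_comm, Finset.sum_comm,
      Finset.mul_sum]
    exact Finset.sum_congr rfl fun i _ =>
      (per_item_welfare hk (fun j => C1 (σ1 j)) (fun j => C2 (σ2 j)) i
        (fun j => hC1 (σ1 j) i) (fun j => hC2 (σ2 j) i)).symm
  -- Step 2 : master inequality per item, integrated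
  have h_master : ∀ i : Fin m, (23/32 : ℝ) * (if i ∈ S then C1 j1s i else C2 j2s i)
      ≤ (∫ u in Set.Ioi (0:ℝ), (rX (fun j => C1 (σ1 j)) i u + rX (fun j => C2 (σ2 j)) i u
          - rX (fun j => C1 (σ1 j)) i u * rX (fun j => C2 (σ2 j)) i u))
        + (3/4) * (∫ u in Set.Ioi (0:ℝ), ((indf (C1 j1s i) u - rX (fun j => C1 (σ1 j)) i u)
            * (1 - (2/3 : ℝ) * rX (fun j => C1 (σ1 j)) i u)))
        + (3/4) * (∫ u in Set.Ioi (0:ℝ), ((indf (C2 j2s i) u - rX (fun j => C2 (σ2 j)) i u)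
            * (1 - (2/3 : ℝ) * rX (fun j => C2 (σ2 j)) i u))) := by
    intro i
    set q : ℝ := if i ∈ S then 1 else 0 with hqdef
    have hq : q = 0 ∨ q = 1 := by rw [hqdef]; split <;> simp
    have nW : Nice (fun u => rX (fun j => C1 (σ1 j)) i u + rX (fun j => C2 (σ2 j)) i u
        - rX (fun j => C1 (σ1 j)) i u * rX (fun j => C2 (σ2 j)) i u) :=
      ((nice_rX _ i).add (nice_rX _ i)).sub ((nice_rX _ i).mul (nice_rX _ i))
    have nL : Nice (fun u => (23/32 : ℝ) * (q * indf (C1 j1s i) u + (1-q) * indf (C2 j2s i) u)) :=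
      (((nice_indf _).const_mul q).add ((nice_indf _).const_mul (1-q))).const_mul (23/32)
    have n1 := nice_g1 (fun j => C1 (σ1 j)) i (C1 j1s i)
    have n2 := nice_g1 (fun j => C2 (σ2 j)) i (C2 j2s i)
    have nR : Nice (fun u => (rX (fun j => C1 (σ1 j)) i u + rX (fun j => C2 (σ2 j)) i u
        - rX (fun j => C1 (σ1 j)) i u * rX (fun j => C2 (σ2 j)) i u)
        + (3/4) * ((indf (C1 j1s i) u - rX (fun j => C1 (σ1 j)) i u)
            * (1 - (2/3 : ℝ) * rX (fun j => C1 (σ1 j)) i u))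
        + (3/4) * ((indf (C2 j2s i) u - rX (fun j => C2 (σ2 j)) i u)
            * (1 - (2/3 : ℝ) * rX (fun j => C2 (σ2 j)) i u))) :=
      (nW.add (n1.const_mul (3/4))).add (n2.const_mul (3/4))
    have hpt : ∀ u ∈ Set.Ioi (0:ℝ),
        (23/32 : ℝ) * (q * indf (C1 j1s i) u + (1-q) * indf (C2 j2s i) u)
        ≤ (rX (fun j => C1 (σ1 j)) i u + rX (fun j => C2 (σ2 j)) i u
            - rX (fun j => C1 (σ1 j)) i u * rX (fun j => C2 (σ2 j)) i u)
          + (3/4) * ((indf (C1 j1s i) u - rX (fun j => C1 (σ1 j)) i u)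
              * (1 - (2/3 : ℝ) * rX (fun j => C1 (σ1 j)) i u))
          + (3/4) * ((indf (C2 j2s i) u - rX (fun j => C2 (σ2 j)) i u)
              * (1 - (2/3 : ℝ) * rX (fun j => C2 (σ2 j)) i u)) := by
      intro u _
      exact master (rX (fun j => C1 (σ1 j)) i u) (rX (fun j => C2 (σ2 j)) i u)
        (indf (C1 j1s i) u) (indf (C2 j2s i) u) q
        (rX_nonneg _ i u) (rX_le_one hk _ i u) (rX_nonneg _ i u) (rX_le_one hk _ i u)
        (ite01 _) (ite01 _) hq
    have key := setIntegral_mono_on nL.2.1 nR.2.1 measurableSet_Ioi hpt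
    have eL : ∫ u in Set.Ioi (0:ℝ),
        ((23/32 : ℝ) * (q * indf (C1 j1s i) u + (1-q) * indf (C2 j2s i) u))
        = (23/32 : ℝ) * (q * C1 j1s i + (1-q) * C2 j2s i) := by
      rw [integral_const_mul,
        integral_add ((nice_indf (C1 j1s i)).const_mul q).2.1
          ((nice_indf (C2 j2s i)).const_mul (1-q)).2.1,
        integral_const_mul, integral_const_mul, integral_indf (hC1 j1s i), integral_indf (hC2 j2s i)]
    have eR : ∫ u in Set.Ioi (0:ℝ),
        ((rX (fun j => C1 (σ1 j)) i u + rX (fun j => C2 (σ2 j)) i u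
          - rX (fun j => C1 (σ1 j)) i u * rX (fun j => C2 (σ2 j)) i u)
        + (3/4) * ((indf (C1 j1s i) u - rX (fun j => C1 (σ1 j)) i u)
            * (1 - (2/3 : ℝ) * rX (fun j => C1 (σ1 j)) i u))
        + (3/4) * ((indf (C2 j2s i) u - rX (fun j => C2 (σ2 j)) i u)
            * (1 - (2/3 : ℝ) * rX (fun j => C2 (σ2 j)) i u)))
        = (∫ u in Set.Ioi (0:ℝ), (rX (fun j => C1 (σ1 j)) i u + rX (fun j => C2 (σ2 j)) i u
            - rX (fun j => C1 (σ1 j)) i u * rX (fun j => C2 (σ2 j)) i u))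
          + (3/4) * (∫ u in Set.Ioi (0:ℝ), ((indf (C1 j1s i) u - rX (fun j => C1 (σ1 j)) i u)
              * (1 - (2/3 : ℝ) * rX (fun j => C1 (σ1 j)) i u)))
          + (3/4) * (∫ u in Set.Ioi (0:ℝ), ((indf (C2 j2s i) u - rX (fun j => C2 (σ2 j)) i u)
              * (1 - (2/3 : ℝ) * rX (fun j => C2 (σ2 j)) i u))) := by
      rw [integral_add (nW.add (n1.const_mul (3/4))).2.1 (n2.const_mul (3/4)).2.1,
        integral_add nW.2.1 (n1.const_mul (3/4)).2.1, integral_const_mul, integral_const_mul]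
    rw [eL, eR] at key
    have : (23/32 : ℝ) * (if i ∈ S then C1 j1s i else C2 j2s i)
        = (23/32 : ℝ) * (q * C1 j1s i + (1-q) * C2 j2s i) := by
      rw [hqdef]; split <;> ring
    rw [this]
    exact key
  -- Step 3 : sum the master inequality
  have h_ite_sum : ∑ i, (if i ∈ S then C1 j1s i else C2 j2s i)
      = ∑ i ∈ S, C1 j1s i + ∑ i ∈ Sᶜ, C2 j2s i := by
    rw [← Finset.sum_add_sum_compl S (fun i => if i ∈ S then C1 j1s i else C2 j2s i)]
    congr 1
    · exact Finset.sum_congr rfl fun i hi => by simp [hi]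
    · exact Finset.sum_congr rfl fun i hi => by
        rw [Finset.mem_compl] at hi; simp [hi]
  have h_summed : (23/32 : ℝ) * SW
      ≤ (∑ i, ∫ u in Set.Ioi (0:ℝ), (rX (fun j => C1 (σ1 j)) i u + rX (fun j => C2 (σ2 j)) i u
            - rX (fun j => C1 (σ1 j)) i u * rX (fun j => C2 (σ2 j)) i u))
        + (3/4) * (∑ i, ∫ u in Set.Ioi (0:ℝ), ((indf (C1 j1s i) u - rX (fun j => C1 (σ1 j)) i u)
            * (1 - (2/3 : ℝ) * rX (fun j => C1 (σ1 j)) i u)))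
        + (3/4) * (∑ i, ∫ u in Set.Ioi (0:ℝ), ((indf (C2 j2s i) u - rX (fun j => C2 (σ2 j)) i u)
            * (1 - (2/3 : ℝ) * rX (fun j => C2 (σ2 j)) i u))) := by
    have := Finset.sum_le_sum (fun i (_ : i ∈ univ) => h_master i)
    rw [← Finset.mul_sum, h_ite_sum, ← hSW] at this
    calc (23/32 : ℝ) * SW ≤ _ := this
      _ = _ := by rw [Finset.sum_add_distrib, Finset.sum_add_distrib, ← Finset.mul_sum, ← Finset.mul_sum]
  -- Step 4 : sketch inequalities and error bounds
  have hT1 := sketch_ineq hk C1 σ1 hσ1 j1s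
  have hT2 := sketch_ineq hk C2 σ2 hσ2 j2s
  have hU1 : ∑ i, ∫ u in Set.Ioi (0:ℝ), (indf (C1 j1s i) u + rX (fun j => C1 (σ1 j)) i u
      - 2 * indf (C1 j1s i) u * rX (fun j => C1 (σ1 j)) i u) ≤ 2 * SW := by
    have per : ∀ i : Fin m, ∫ u in Set.Ioi (0:ℝ), (indf (C1 j1s i) u + rX (fun j => C1 (σ1 j)) i u
        - 2 * indf (C1 j1s i) u * rX (fun j => C1 (σ1 j)) i u)
        ≤ C1 j1s i + (∑ j, C1 (σ1 j) i) / k := by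
      intro i
      have hmono := setIntegral_mono_on (nice_g2 (fun j => C1 (σ1 j)) i (C1 j1s i)).2.1
        ((nice_indf (C1 j1s i)).add (nice_rX (fun j => C1 (σ1 j)) i)).2.1 measurableSet_Ioi
        (fun u _ => by
          have := mul_nonneg (indf_nonneg (C1 j1s i) u) (rX_nonneg (fun j => C1 (σ1 j)) i u)
          nlinarith)
      rwa [integral_add (nice_indf (C1 j1s i)).2.1 (nice_rX (fun j => C1 (σ1 j)) i).2.1,
        integral_indf (hC1 j1s i), integral_rX _ i (fun j => hC1 (σ1 j) i)] at hmono
    calc _ ≤ ∑ i, (C1 j1s i + (∑ j, C1 (σ1 j) i) / k) := Finset.sum_le_sum fun i _ => per i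
      _ = aval (C1 j1s) univ + (∑ j : Fin k, aval (C1 (σ1 j)) univ) / k := by
          rw [Finset.sum_add_distrib, ← Finset.sum_div, Finset.sum_comm]
          unfold aval
          norm_num
      _ ≤ SW + SW := by
          have h1 := aval_univ_le_swR C1 C2 j1s
          have h2 : (∑ j : Fin k, aval (C1 (σ1 j)) univ) / k ≤ SW := by
            rw [div_le_iff₀ hkR]
            calc ∑ j : Fin k, aval (C1 (σ1 j)) univ ≤ ∑ _j : Fin k, SW :=
                  Finset.sum_le_sum fun j _ => aval_univ_le_swR C1 C2 (σ1 j)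
              _ = SW * (k:ℝ) := by
                  rw [Finset.sum_const, Finset.card_univ, Fintype.card_fin, nsmul_eq_mul]; ring
          linarith
      _ = 2 * SW := by ring
  have hU2 : ∑ i, ∫ u in Set.Ioi (0:ℝ), (indf (C2 j2s i) u + rX (fun j => C2 (σ2 j)) i u
      - 2 * indf (C2 j2s i) u * rX (fun j => C2 (σ2 j)) i u) ≤ 2 * SW := by
    have per : ∀ i : Fin m, ∫ u in Set.Ioi (0:ℝ), (indf (C2 j2s i) u + rX (fun j => C2 (σ2 j)) i u
        - 2 * indf (C2 j2s i) u * rX (fun j => C2 (σ2 j)) i u)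
        ≤ C2 j2s i + (∑ j, C2 (σ2 j) i) / k := by
      intro i
      have hmono := setIntegral_mono_on (nice_g2 (fun j => C2 (σ2 j)) i (C2 j2s i)).2.1
        ((nice_indf (C2 j2s i)).add (nice_rX (fun j => C2 (σ2 j)) i)).2.1 measurableSet_Ioi
        (fun u _ => by
          have := mul_nonneg (indf_nonneg (C2 j2s i) u) (rX_nonneg (fun j => C2 (σ2 j)) i u)
          nlinarith)
      rwa [integral_add (nice_indf (C2 j2s i)).2.1 (nice_rX (fun j => C2 (σ2 j)) i).2.1,
        integral_indf (hC2 j2s i), integral_rX _ i (fun j => hC2 (σ2 j) i)] at hmono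
    calc _ ≤ ∑ i, (C2 j2s i + (∑ j, C2 (σ2 j) i) / k) := Finset.sum_le_sum fun i _ => per i
      _ = aval (C2 j2s) univ + (∑ j : Fin k, aval (C2 (σ2 j)) univ) / k := by
          rw [Finset.sum_add_distrib, ← Finset.sum_div, Finset.sum_comm]
          unfold aval
          norm_num
      _ ≤ SW + SW := by
          have h1 := aval_univ_le_swR' C1 C2 j2s
          have h2 : (∑ j : Fin k, aval (C2 (σ2 j)) univ) / k ≤ SW := by
            rw [div_le_iff₀ hkR]
            calc ∑ j : Fin k, aval (C2 (σ2 j)) univ ≤ ∑ _j : Fin k, SW :=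
                  Finset.sum_le_sum fun j _ => aval_univ_le_swR' C1 C2 (σ2 j)
              _ = SW * (k:ℝ) := by
                  rw [Finset.sum_const, Finset.card_univ, Fintype.card_fin, nsmul_eq_mul]; ring
          linarith
      _ = 2 * SW := by ring
  -- Step 5 : combine everything
  have hT1' : (∑ i, ∫ u in Set.Ioi (0:ℝ), ((indf (C1 j1s i) u - rX (fun j => C1 (σ1 j)) i u)
      * (1 - (2/3 : ℝ) * rX (fun j => C1 (σ1 j)) i u))) ≤ (1/(3*(k:ℝ))) * (2 * SW) :=
    hT1.trans (mul_le_mul_of_nonneg_left hU1 (by positivity))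
  have hT2' : (∑ i, ∫ u in Set.Ioi (0:ℝ), ((indf (C2 j2s i) u - rX (fun j => C2 (σ2 j)) i u)
      * (1 - (2/3 : ℝ) * rX (fun j => C2 (σ2 j)) i u))) ≤ (1/(3*(k:ℝ))) * (2 * SW) :=
    hT2.trans (mul_le_mul_of_nonneg_left hU2 (by positivity))
  have hcomb : (3/4 : ℝ) * ((1/(3*(k:ℝ))) * (2 * SW)) + (3/4) * ((1/(3*(k:ℝ))) * (2 * SW))
      = (1/(k:ℝ)) * SW := by field_simp; ring
  have part1 : (1 / (k : ℝ) ^ 2) * ∑ j, ∑ j', swR (aval (C1 (σ1 j))) (aval (C2 (σ2 j')))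
      ≥ (23 / 32 - 1 / k : ℝ) * SW := by
    rw [h_avg]
    have expand : (23 / 32 - 1 / (k:ℝ)) * SW = (23/32) * SW - (1/(k:ℝ)) * SW := by ring
    rw [ge_iff_le, expand]
    linarith
  refine ⟨part1, ?_⟩
  by_contra hcon
  push_neg at hcon
  have hne : (Finset.univ : Finset (Fin k)).Nonempty := ⟨⟨0, hk⟩, Finset.mem_univ _⟩
  have hlt : ∑ j, ∑ j', swR (aval (C1 (σ1 j))) (aval (C2 (σ2 j')))
      < ∑ _j : Fin k, ∑ _j' : Fin k, (23 / 32 - 1 / (k:ℝ)) * SW := by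
    apply Finset.sum_lt_sum_of_nonempty hne
    intro j _
    apply Finset.sum_lt_sum_of_nonempty hne
    intro j' _
    exact hcon j j'
  have hconst : ∑ _j : Fin k, ∑ _j' : Fin k, (23 / 32 - 1 / (k:ℝ)) * SW
      = (k:ℝ)^2 * ((23 / 32 - 1 / (k:ℝ)) * SW) := by
    rw [Finset.sum_const, Finset.sum_const, Finset.card_univ, Fintype.card_fin,
      nsmul_eq_mul, nsmul_eq_mul]
    ring
  rw [hconst] at hlt
  have := mul_lt_mul_of_pos_left hlt (show (0:ℝ) < 1/(k:ℝ)^2 by positivity)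
  rw [ge_iff_le] at part1
  have heq : (1/(k:ℝ)^2) * ((k:ℝ)^2 * ((23 / 32 - 1 / (k:ℝ)) * SW))
      = (23 / 32 - 1 / (k:ℝ)) * SW := by field_simp
  rw [heq] at this
  linarith
end

section
/- Let v1 be a binary XOS valuation on [m] and let k be a positive integer. For a k-tuple (b_1,…,b_k) of arbitrary binary additive valuations (i.e., arbitrary subsets B_1,…,B_k ⊆ [m]), define the expected utility U(b_1,…,b_k) = ∑_{j=1}^k v1(B_j) − (k/2) ∑_{i=1}^m x_i², where x_i = (1/k) ∑_{j=1}^k 1[i ∈ B_j]. If (b_1,…,b_k) maximizes U over all k-tuples of binary additive valuations, then each b_j is a clause of v1 and (b_1,…,b_k) is a (k,1/2)-sketch of v1. (This shows that in the proposed mechanism, reporting a (k,1/2)-sketch is a dominant strategy for each bidder.) -/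
open Finset

/-- A bidder's expected utility in the mechanism when reporting the `k`-tuple of sets `b`:
`∑_j v1(B_j) − (k/2) ∑_i x_i²`. -/
noncomputable def utility {m k : ℕ} (V1 : Finset (Finset (Fin m)))
    (b : Fin k → Finset (Fin m)) : ℝ :=
  (∑ j, (xval V1 (b j) : ℝ)) - (k / 2 : ℝ) * ∑ i, (sketchX b i) ^ 2

lemma xval_mem {m : ℕ} {V : Finset (Finset (Fin m))} {A : Finset (Fin m)} (hA : A ∈ V) :
    xval V A = A.card := by
  apply le_antisymm
  · exact Finset.sup_le fun C _ => Finset.card_le_card Finset.inter_subset_right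
  · simpa [xval] using Finset.le_sup (f := fun C => (C ∩ A).card) hA

lemma sketchX_nonneg {m k : ℕ} (s : Fin k → Finset (Fin m)) (i : Fin m) :
    0 ≤ sketchX s i := by
  unfold sketchX
  apply div_nonneg _ (Nat.cast_nonneg k)
  apply Finset.sum_nonneg; intro j _; split <;> norm_num

lemma sketchX_le_one {m k : ℕ} (hk : 0 < k) (s : Fin k → Finset (Fin m)) (i : Fin m) :
    sketchX s i ≤ 1 := by
  unfold sketchX
  rw [div_le_one (by exact_mod_cast hk)]
  calc ∑ j, (if i ∈ s j then (1:ℝ) else 0) ≤ ∑ _j : Fin k, (1:ℝ) := by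
        apply Finset.sum_le_sum; intro j _; split <;> norm_num
    _ = k := by simp

lemma sketchX_mono {m k : ℕ} {s t : Fin k → Finset (Fin m)}
    (h : ∀ j, s j ⊆ t j) (i : Fin m) : sketchX s i ≤ sketchX t i := by
  unfold sketchX
  apply div_le_div_of_nonneg_right _ (Nat.cast_nonneg k)
  apply Finset.sum_le_sum; intro j _
  by_cases hij : i ∈ s j
  · simp [hij, h j hij]
  · simp only [if_neg hij]; split <;> norm_num

lemma sum_card_eq {m k : ℕ} (hk : 0 < k) (s : Fin k → Finset (Fin m)) :
    (∑ j, ((s j).card : ℝ)) = k * ∑ i, sketchX s i := by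
  have hk' : (k:ℝ) ≠ 0 := Nat.cast_ne_zero.2 hk.ne'
  calc ∑ j, ((s j).card : ℝ) = ∑ j, ∑ i, (if i ∈ s j then (1:ℝ) else 0) := by
        refine Finset.sum_congr rfl fun j _ => ?_
        simp [Finset.sum_ite_mem]
    _ = ∑ i, ∑ j, (if i ∈ s j then (1:ℝ) else 0) := Finset.sum_comm
    _ = ∑ i : Fin m, k * sketchX s i := by
        refine Finset.sum_congr rfl fun i _ => ?_
        unfold sketchX; field_simp
    _ = k * ∑ i, sketchX s i := by rw [Finset.mul_sum]

lemma utility_of_clauses {m k : ℕ} (hk : 0 < k) {V1 : Finset (Finset (Fin m))}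
    {s : Fin k → Finset (Fin m)} (hs : ∀ j, s j ∈ V1) :
    utility V1 s = k * sketchObj (1 / 2 : ℝ) s := by
  have h1 : (∑ j, ((xval V1 (s j)):ℝ)) = k * ∑ i, sketchX s i := by
    rw [Finset.sum_congr rfl fun j _ => by rw [xval_mem (hs j)]]
    exact sum_card_eq hk s
  have h2 : sketchObj (1 / 2 : ℝ) s
      = (∑ i, sketchX s i) - (1/2) * ∑ i, (sketchX s i)^2 := by
    unfold sketchObj
    rw [Finset.sum_sub_distrib, Finset.mul_sum]
  rw [utility, h1, h2]; ring

/-- any `k`-tuple of binary additive reports maximizing the expected utility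
in the mechanism consists of clauses of `v1` and is a `(k,1/2)`-sketch of `v1`. -/
theorem stmt12 {m k : ℕ} (hk : 0 < k)
    (V1 : Finset (Finset (Fin m))) (hV1 : V1.Nonempty)
    (b : Fin k → Finset (Fin m))
    (hmax : ∀ c : Fin k → Finset (Fin m), utility V1 c ≤ utility V1 b) :
    (∀ j, b j ∈ V1) ∧ IsSketch (1 / 2 : ℝ) V1 b := by
  have hkR : (0:ℝ) < k := Nat.cast_pos.2 hk
  have hex : ∀ j, ∃ A ∈ V1, xval V1 (b j) = (A ∩ b j).card := fun j =>
    Finset.exists_mem_eq_sup V1 hV1 _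
  choose A hA hAval using hex
  set d : Fin k → Finset (Fin m) := fun j => A j ∩ b j with hd
  have hdb : ∀ j, d j ⊆ b j := fun j => Finset.inter_subset_right
  have hdA : ∀ j, d j ⊆ A j := fun j => Finset.inter_subset_left
  set x := sketchX b with hx
  set y := sketchX d with hy
  set z := sketchX A with hz
  have hyx : ∀ i, y i ≤ x i := sketchX_mono hdb
  have hyz : ∀ i, y i ≤ z i := sketchX_mono hdA
  have hy0 : ∀ i, 0 ≤ y i := sketchX_nonneg d
  have hz1 : ∀ i, z i ≤ 1 := sketchX_le_one hk A
  -- utilities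
  have hub : utility V1 b = k * (∑ i, y i) - (k/2) * ∑ i, (x i)^2 := by
    rw [utility]
    congr 1
    · rw [Finset.sum_congr rfl fun j _ => by rw [hAval j]]
      exact sum_card_eq hk d
  have huA : utility V1 A = k * (∑ i, z i) - (k/2) * ∑ i, (z i)^2 := by
    rw [utility]
    congr 1
    · rw [Finset.sum_congr rfl fun j _ => by rw [xval_mem (hA j)]]
      exact sum_card_eq hk A
  -- inequalities
  have h2 : ∑ i, (y i)^2 ≤ ∑ i, (x i)^2 :=
    Finset.sum_le_sum fun i _ => by nlinarith [hy0 i, hyx i]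
  have h3 : (∑ i, y i) - (∑ i, (y i)^2)/2 ≤ (∑ i, z i) - (∑ i, (z i)^2)/2 := by
    rw [Finset.sum_div, Finset.sum_div, ← Finset.sum_sub_distrib,
      ← Finset.sum_sub_distrib]
    exact Finset.sum_le_sum fun i _ => by nlinarith [hy0 i, hyz i, hz1 i]
  have hmaxA := hmax A
  -- equalities forced by maximality
  have hE1 : ∑ i, (x i)^2 = ∑ i, (y i)^2 := by
    have hx2y2 : (k/2) * ∑ i, (x i)^2 ≤ (k/2) * ∑ i, (y i)^2 := by nlinarith
    have := mul_le_mul_of_nonneg_left h2 (le_of_lt (by positivity : (0:ℝ) < k/2))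
    have := le_antisymm hx2y2 this
    exact mul_left_cancel₀ (by positivity : (k:ℝ)/2 ≠ 0) this
  have hE2 : (∑ i, y i) - (∑ i, (y i)^2)/2 = (∑ i, z i) - (∑ i, (z i)^2)/2 := by
    have h := mul_le_mul_of_nonneg_left h3 hkR.le
    have hk2 : k * ((∑ i, y i) - (∑ i, (y i)^2)/2) = k * ((∑ i, z i) - (∑ i, (z i)^2)/2) := by
      nlinarith
    exact mul_left_cancel₀ hkR.ne' hk2
  -- pointwise equalities
  have hyx' : ∀ i, y i = x i := by
    have hpt := (Finset.sum_eq_sum_iff_of_le (fun i _ => by nlinarith [hy0 i, hyx i] :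
      ∀ i ∈ Finset.univ, (y i)^2 ≤ (x i)^2)).mp hE1.symm
    intro i
    have := hpt i (Finset.mem_univ i)
    nlinarith [hy0 i, hyx i]
  have hyz' : ∀ i, y i = z i := by
    have hle : ∀ i ∈ Finset.univ, y i - (y i)^2/2 ≤ z i - (z i)^2/2 :=
      fun i _ => by nlinarith [hy0 i, hyz i, hz1 i]
    have hsum : ∑ i, (y i - (y i)^2/2) = ∑ i, (z i - (z i)^2/2) := by
      rw [Finset.sum_sub_distrib, Finset.sum_sub_distrib, ← Finset.sum_div, ← Finset.sum_div]
      linarith [hE2]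
    have hpt := (Finset.sum_eq_sum_iff_of_le hle).mp hsum
    intro i
    have := hpt i (Finset.mem_univ i)
    have h1 := hy0 i; have h2 := hyz i; have h3 := hz1 i
    nlinarith [sq_nonneg (z i - y i)]
  -- from pointwise equalities: d j = b j and d j = A j
  have hcardb : ∑ j, (d j).card = ∑ j, (b j).card := by
    have : (∑ j, ((d j).card : ℝ)) = ∑ j, ((b j).card : ℝ) := by
      rw [sum_card_eq hk d, sum_card_eq hk b, ← hx, ← hy]
      rw [Finset.sum_congr rfl fun i _ => hyx' i]
    exact_mod_cast this
  have hcardA : ∑ j, (d j).card = ∑ j, (A j).card := by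
    have : (∑ j, ((d j).card : ℝ)) = ∑ j, ((A j).card : ℝ) := by
      rw [sum_card_eq hk d, sum_card_eq hk A, ← hz, ← hy]
      rw [Finset.sum_congr rfl fun i _ => hyz' i]
    exact_mod_cast this
  have hdbj : ∀ j, d j = b j := by
    have hpt := (Finset.sum_eq_sum_iff_of_le (fun j _ => Finset.card_le_card (hdb j))).mp hcardb
    exact fun j => Finset.eq_of_subset_of_card_le (hdb j) (hpt j (Finset.mem_univ j)).ge
  have hdAj : ∀ j, d j = A j := by
    have hpt := (Finset.sum_eq_sum_iff_of_le (fun j _ => Finset.card_le_card (hdA j))).mp hcardA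
    exact fun j => Finset.eq_of_subset_of_card_le (hdA j) (hpt j (Finset.mem_univ j)).ge
  have hbV : ∀ j, b j ∈ V1 := fun j => by rw [← hdbj j, hdAj j]; exact hA j
  refine ⟨hbV, hbV, fun c hc => ?_⟩
  have h1 := hmax c
  rw [utility_of_clauses hk hc, utility_of_clauses hk hbV] at h1
  exact le_of_mul_le_mul_left h1 hkR
end

section
/- Let m be a positive integer divisible by 6, and let S, T ⊆ [m] with |S| = |T| = m/2 and |S ∩ T| = m/3. Let A be drawn uniformly at random from all sets X ⊆ [m] with |X ∩ S| = m/3 and |X ∩ ([m] ∖ S)| = m/6, and independently let B be drawn uniformly at random from all sets X ⊆ [m] with |X ∩ T| = m/3 and |X ∩ ([m] ∖ T)| = m/6. Then E[|A ∪ B|] = 20m/27. -/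
open Finset

/-- The family of "random clauses" correlated with a hidden set `S`: all sets `X ⊆ [m]`
with `|X ∩ S| = m/3` and `|X ∩ ([m] ∖ S)| = m/6`. -/
def clauseFamily {m : ℕ} (S : Finset (Fin m)) : Finset (Finset (Fin m)) :=
  Finset.univ.filter fun X => (X ∩ S).card = m / 3 ∧ (X ∩ Sᶜ).card = m / 6

lemma compl_image_eq {m : ℕ} {S : Finset (Fin m)} {σ : Equiv.Perm (Fin m)}
    (h : S.image σ = S) : Sᶜ.image σ = Sᶜ := by
  apply Finset.eq_of_subset_of_card_le
  · intro z hz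
    simp only [Finset.mem_image] at hz
    obtain ⟨w, hw, rfl⟩ := hz
    simp only [Finset.mem_compl] at hw ⊢
    intro hzS
    rw [← h] at hzS
    simp only [Finset.mem_image] at hzS
    obtain ⟨u, hu, hue⟩ := hzS
    exact hw (σ.injective hue ▸ hu)
  · rw [Finset.card_image_of_injective _ σ.injective]

lemma swap_image_self {m : ℕ} {S : Finset (Fin m)} {x y : Fin m}
    (hx : x ∈ S) (hy : y ∈ S) : S.image (Equiv.swap x y) = S := by
  apply Finset.eq_of_subset_of_card_le
  · intro z hz
    simp only [Finset.mem_image] at hz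
    obtain ⟨w, hw, rfl⟩ := hz
    rcases Equiv.swap_apply_def x y w with _
    by_cases h1 : w = x
    · subst h1; rw [Equiv.swap_apply_left]; exact hy
    by_cases h2 : w = y
    · subst h2; rw [Equiv.swap_apply_right]; exact hx
    · rw [Equiv.swap_apply_of_ne_of_ne h1 h2]; exact hw
  · rw [Finset.card_image_of_injective _ (Equiv.swap x y).injective]

lemma swap_image_self' {m : ℕ} {S : Finset (Fin m)} {x y : Fin m}
    (hx : x ∉ S) (hy : y ∉ S) : S.image (Equiv.swap x y) = S := by
  rw [show S.image (Equiv.swap x y) = S.image id from Finset.image_congr ?_, Finset.image_id]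
  intro z hz
  exact Equiv.swap_apply_of_ne_of_ne (fun h => hx (h ▸ hz)) (fun h => hy (h ▸ hz))

lemma mem_clauseFamily_image {m : ℕ} {S : Finset (Fin m)} {σ : Equiv.Perm (Fin m)}
    (h : S.image σ = S) {A : Finset (Fin m)} (hA : A ∈ clauseFamily S) :
    A.image σ ∈ clauseFamily S := by
  simp only [clauseFamily, Finset.mem_filter, Finset.mem_univ, true_and] at hA ⊢
  constructor
  · rw [show A.image σ ∩ S = (A ∩ S).image σ by
      rw [Finset.image_inter _ _ σ.injective, h],
      Finset.card_image_of_injective _ σ.injective]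
    exact hA.1
  · rw [show A.image σ ∩ Sᶜ = (A ∩ Sᶜ).image σ by
      rw [Finset.image_inter _ _ σ.injective, compl_image_eq h],
      Finset.card_image_of_injective _ σ.injective]
    exact hA.2

lemma cnt_perm {m : ℕ} {S : Finset (Fin m)} {σ : Equiv.Perm (Fin m)}
    (h : S.image σ = S) (x : Fin m) :
    ((clauseFamily S).filter (fun A => x ∈ A)).card
      = ((clauseFamily S).filter (fun A => σ x ∈ A)).card := by
  apply Finset.card_bij' (fun A _ => A.image σ) (fun B _ => B.image σ.symm)
  · intro A _
    rw [Finset.image_image]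
    simp [Function.comp_def]
  · intro B _
    rw [Finset.image_image]
    simp [Function.comp_def]
  · intro A hA
    simp only [Finset.mem_filter] at hA ⊢
    refine ⟨mem_clauseFamily_image h hA.1, ?_⟩
    exact Finset.mem_image_of_mem _ hA.2
  · intro B hB
    simp only [Finset.mem_filter] at hB ⊢
    have h' : S.image (σ.symm : Equiv.Perm (Fin m)) = S := by
      conv_lhs => rw [← h]
      rw [Finset.image_image]
      simp [Function.comp_def]
    refine ⟨mem_clauseFamily_image h' hB.1, ?_⟩
    rw [Finset.mem_image]
    exact ⟨σ x, hB.2, σ.symm_apply_apply x⟩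

lemma cnt_const_on {m : ℕ} {S : Finset (Fin m)} {x y : Fin m}
    (h : (x ∈ S ∧ y ∈ S) ∨ (x ∉ S ∧ y ∉ S)) :
    ((clauseFamily S).filter (fun A => x ∈ A)).card
      = ((clauseFamily S).filter (fun A => y ∈ A)).card := by
  have himg : S.image (Equiv.swap x y) = S := by
    rcases h with ⟨hx, hy⟩ | ⟨hx, hy⟩
    · exact swap_image_self hx hy
    · exact swap_image_self' hx hy
  have := cnt_perm himg x
  rwa [Equiv.swap_apply_left] at this

lemma sum_cnt {m : ℕ} (S U : Finset (Fin m)) (c : ℕ)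
    (h : ∀ A ∈ clauseFamily S, (A ∩ U).card = c) :
    ∑ x ∈ U, ((clauseFamily S).filter (fun A => x ∈ A)).card
      = c * (clauseFamily S).card := by
  have : ∀ x, ((clauseFamily S).filter (fun A => x ∈ A)).card
      = ∑ A ∈ clauseFamily S, if x ∈ A then 1 else 0 := fun x =>
    Finset.card_filter _ _
  simp_rw [this]
  rw [Finset.sum_comm]
  rw [Finset.sum_congr rfl (fun A hA => ?_), Finset.sum_const, smul_eq_mul, mul_comm]
  rw [Finset.sum_boole]
  rw [Finset.filter_mem_eq_inter, Finset.inter_comm]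
  exact_mod_cast h A hA

lemma clauseFamily_nonempty {m k : ℕ} (hm : m = 6 * k) (S : Finset (Fin m))
    (hS : S.card = 3 * k) : (clauseFamily S).Nonempty := by
  have hcompl : Sᶜ.card = 3 * k := by
    rw [Finset.card_compl, hS, Fintype.card_fin]
    omega
  obtain ⟨t1, ht1s, ht1⟩ := Finset.exists_subset_card_eq (show 2 * k ≤ S.card by omega)
  obtain ⟨t2, ht2s, ht2⟩ := Finset.exists_subset_card_eq (show k ≤ Sᶜ.card by omega)
  refine ⟨t1 ∪ t2, ?_⟩
  have hd1 : t2 ∩ S = ∅ := by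
    rw [← Finset.disjoint_iff_inter_eq_empty]
    exact Finset.disjoint_left.2 fun a ha hb => (Finset.mem_compl.1 (ht2s ha)) hb
  have hd2 : t1 ∩ Sᶜ = ∅ := by
    rw [← Finset.disjoint_iff_inter_eq_empty]
    exact Finset.disjoint_left.2 fun a ha hb => (Finset.mem_compl.1 hb) (ht1s ha)
  simp only [clauseFamily, Finset.mem_filter, Finset.mem_univ, true_and]
  constructor
  · rw [Finset.union_inter_distrib_right, hd1, Finset.union_empty,
      Finset.inter_eq_left.2 ht1s, ht1]
    omega
  · rw [Finset.union_inter_distrib_right, hd2, Finset.empty_union,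
      Finset.inter_eq_left.2 ht2s, ht2]
    omega

lemma cnt_val {m k : ℕ} (hm : m = 6 * k) (hk : 0 < k) (S : Finset (Fin m))
    (hS : S.card = 3 * k) (x : Fin m) :
    3 * ((clauseFamily S).filter (fun A => x ∈ A)).card
      = (if x ∈ S then 2 else 1) * (clauseFamily S).card := by
  have hcompl : Sᶜ.card = 3 * k := by
    rw [Finset.card_compl, hS, Fintype.card_fin]; omega
  by_cases hx : x ∈ S
  · have hsum := sum_cnt S S (2 * k) (fun A hA => by
      simp only [clauseFamily, Finset.mem_filter] at hA
      omega)
    have hconst : ∑ y ∈ S, ((clauseFamily S).filter (fun A => y ∈ A)).card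
        = S.card * ((clauseFamily S).filter (fun A => x ∈ A)).card := by
      rw [Finset.sum_congr rfl (fun y hy => cnt_const_on (Or.inl ⟨hy, hx⟩)),
        Finset.sum_const, smul_eq_mul]
    rw [hconst, hS] at hsum
    simp only [hx, if_true]
    refine Nat.eq_of_mul_eq_mul_left hk ?_
    ring_nf
    ring_nf at hsum
    linarith
  · have hsum := sum_cnt S Sᶜ k (fun A hA => by
      simp only [clauseFamily, Finset.mem_filter] at hA
      omega)
    have hconst : ∑ y ∈ Sᶜ, ((clauseFamily S).filter (fun A => y ∈ A)).card
        = Sᶜ.card * ((clauseFamily S).filter (fun A => x ∈ A)).card := by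
      rw [Finset.sum_congr rfl (fun y hy =>
          cnt_const_on (Or.inr ⟨Finset.mem_compl.1 hy, hx⟩)),
        Finset.sum_const, smul_eq_mul]
    rw [hconst, hcompl] at hsum
    simp only [hx, if_false]
    refine Nat.eq_of_mul_eq_mul_left hk ?_
    ring_nf
    ring_nf at hsum
    linarith

/-- if `A` and `B` are drawn independently and uniformly from the clause
families of `S` and `T` respectively, where `|S| = |T| = m/2` and `|S ∩ T| = m/3`, then
`E[|A ∪ B|] = 20m/27`. -/
theorem stmt14 {m : ℕ} (hm : 0 < m) (h6 : 6 ∣ m)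
    (S T : Finset (Fin m)) (hS : S.card = m / 2) (hT : T.card = m / 2)
    (hST : (S ∩ T).card = m / 3) :
    (∑ A ∈ clauseFamily S, ∑ B ∈ clauseFamily T, ((A ∪ B).card : ℝ))
        / (((clauseFamily S).card : ℝ) * ((clauseFamily T).card : ℝ))
      = 20 * m / 27 := by
  obtain ⟨k, rfl⟩ := h6
  have hk : 0 < k := by omega
  have hS' : S.card = 3 * k := by omega
  have hT' : T.card = 3 * k := by omega
  have hST' : (S ∩ T).card = 2 * k := by omega
  set F := clauseFamily S with hF
  set G := clauseFamily T with hG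
  have hNpos : 0 < F.card := (clauseFamily_nonempty rfl S hS').card_pos
  have hMpos : 0 < G.card := (clauseFamily_nonempty rfl T hT').card_pos
  set N : ℝ := (F.card : ℝ) with hNdef
  set M : ℝ := (G.card : ℝ) with hMdef
  have hN0 : N ≠ 0 := by rw [hNdef]; exact_mod_cast hNpos.ne'
  have hM0 : M ≠ 0 := by rw [hMdef]; exact_mod_cast hMpos.ne'
  set cS : Fin (6 * k) → ℝ := fun x => ((F.filter (fun A => x ∈ A)).card : ℝ) with hcSdef
  set cT : Fin (6 * k) → ℝ := fun x => ((G.filter (fun B => x ∈ B)).card : ℝ) with hcTdef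
  have hcS : ∀ x, cS x = N * (1 + (if x ∈ S then (1:ℝ) else 0)) / 3 := by
    intro x
    have h := cnt_val rfl hk S hS' x
    have h' : (3:ℝ) * cS x = (if x ∈ S then 2 else 1) * N := by
      rw [hcSdef, hNdef]
      by_cases hx : x ∈ S <;> simp only [hx, if_true, if_false] at h ⊢ <;> exact_mod_cast h
    by_cases hx : x ∈ S <;> simp only [hx, if_true, if_false] at h' ⊢ <;> linarith
  have hcT : ∀ x, cT x = M * (1 + (if x ∈ T then (1:ℝ) else 0)) / 3 := by
    intro x
    have h := cnt_val rfl hk T hT' x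
    have h' : (3:ℝ) * cT x = (if x ∈ T then 2 else 1) * M := by
      rw [hcTdef, hMdef]
      by_cases hx : x ∈ T <;> simp only [hx, if_true, if_false] at h ⊢ <;> exact_mod_cast h
    by_cases hx : x ∈ T <;> simp only [hx, if_true, if_false] at h' ⊢ <;> linarith
  have key : ∑ A ∈ F, ∑ B ∈ G, ((A ∪ B).card : ℝ)
      = ∑ x : Fin (6 * k), (M * cS x + N * cT x - cS x * cT x) := by
    have h1 : ∀ A B : Finset (Fin (6 * k)), ((A ∪ B).card : ℝ)
        = ∑ x : Fin (6 * k), ((if x ∈ A then (1:ℝ) else 0) + (if x ∈ B then (1:ℝ) else 0)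
            - (if x ∈ A then (1:ℝ) else 0) * (if x ∈ B then (1:ℝ) else 0)) := by
      intro A B
      have h2 : ((A ∪ B).card : ℝ) = ∑ x : Fin (6 * k), (if x ∈ A ∪ B then (1:ℝ) else 0) := by
        rw [Finset.sum_boole, Finset.filter_univ_mem]
      rw [h2]
      refine Finset.sum_congr rfl fun x _ => ?_
      by_cases hA : x ∈ A <;> by_cases hB : x ∈ B <;> simp [hA, hB]
    simp_rw [h1]
    have h3 : ∀ A ∈ F, ∑ B ∈ G, ∑ x : Fin (6 * k),
        ((if x ∈ A then (1:ℝ) else 0) + (if x ∈ B then (1:ℝ) else 0)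
          - (if x ∈ A then (1:ℝ) else 0) * (if x ∈ B then (1:ℝ) else 0))
        = ∑ x : Fin (6 * k), (M * (if x ∈ A then (1:ℝ) else 0) + cT x
            - (if x ∈ A then (1:ℝ) else 0) * cT x) := by
      intro A _
      rw [Finset.sum_comm]
      refine Finset.sum_congr rfl fun x _ => ?_
      have hb : ∑ B ∈ G, (if x ∈ B then (1:ℝ) else 0) = cT x := by
        rw [Finset.sum_boole, hcTdef]
      rw [Finset.sum_sub_distrib, Finset.sum_add_distrib, Finset.sum_const, hb,
        ← Finset.mul_sum, hb, nsmul_eq_mul, ← hMdef, mul_comm M]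
    rw [Finset.sum_congr rfl h3, Finset.sum_comm]
    refine Finset.sum_congr rfl fun x _ => ?_
    have ha : ∑ A ∈ F, (if x ∈ A then (1:ℝ) else 0) = cS x := by
      rw [Finset.sum_boole, hcSdef]
    rw [Finset.sum_sub_distrib, Finset.sum_add_distrib, Finset.sum_const,
      ← Finset.mul_sum, ha, ← Finset.sum_mul, ha, nsmul_eq_mul, ← hNdef]
  have keyval : ∑ x : Fin (6 * k), (M * cS x + N * cT x - cS x * cT x)
      = N * M / 9 * (40 * k) := by
    have hterm : ∀ x : Fin (6 * k), M * cS x + N * cT x - cS x * cT x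
        = N * M / 9 * (5 + 2 * (if x ∈ S then (1:ℝ) else 0)
            + 2 * (if x ∈ T then (1:ℝ) else 0)
            - (if x ∈ S then (1:ℝ) else 0) * (if x ∈ T then (1:ℝ) else 0)) := by
      intro x
      rw [hcS x, hcT x]
      ring
    rw [Finset.sum_congr rfl fun x _ => hterm x, ← Finset.mul_sum]
    have hsS : ∑ x : Fin (6 * k), (if x ∈ S then (1:ℝ) else 0) = 3 * k := by
      rw [Finset.sum_boole, Finset.filter_univ_mem, hS']
      push_cast; ring
    have hsT : ∑ x : Fin (6 * k), (if x ∈ T then (1:ℝ) else 0) = 3 * k := by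
      rw [Finset.sum_boole, Finset.filter_univ_mem, hT']
      push_cast; ring
    have hsST : ∑ x : Fin (6 * k),
        (if x ∈ S then (1:ℝ) else 0) * (if x ∈ T then (1:ℝ) else 0) = 2 * k := by
      have : ∀ x : Fin (6 * k), (if x ∈ S then (1:ℝ) else 0) * (if x ∈ T then (1:ℝ) else 0)
          = (if x ∈ S ∩ T then (1:ℝ) else 0) := by
        intro x
        by_cases h1 : x ∈ S <;> by_cases h2 : x ∈ T <;> simp [h1, h2]
      rw [Finset.sum_congr rfl fun x _ => this x, Finset.sum_boole,
        Finset.filter_univ_mem, hST']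
      push_cast; ring
    rw [Finset.sum_sub_distrib, Finset.sum_add_distrib, Finset.sum_add_distrib,
      Finset.sum_const, ← Finset.mul_sum, ← Finset.mul_sum, hsS, hsT, hsST,
      Finset.card_univ, Fintype.card_fin, nsmul_eq_mul]
    push_cast
    ring
  rw [key, keyval]
  field_simp
  push_cast
  ring
end
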